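/- arXiv:2009.04529 — 8 statements merged into one kernel-verified Lean document; each statement's English description precedes it below -/
import Mathlib

section
/- For all integers s ≥ 2 and all integers k, n with 0 ≤ k < n, the guessing number of the join of a complete graph on k vertices with an empty graph on n−k vertices satisfies gn(K_k ⊕ E_{n−k}, s) = k. -/
open SimpleGraph

/-- A strategy for the guessing game on `G` with `s` colors: a family of guessing
functions, one per vertex, where each vertex's guess depends only on the colors
of the vertices in its (open) neighborhood. -/
def IsGuessingStrategy {V : Type*} (G : SimpleGraph V) (s : ℕ)
    (f : V → (V → Fin s) → Fin s) : Prop :=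
  ∀ (v : V) (c₁ c₂ : V → Fin s), (∀ u, G.Adj v u → c₁ u = c₂ u) → f v c₁ = f v c₂

/-- The maximum, over all strategies for the guessing game on `G` with `s` colors,
of the number of fixed points of the strategy (colorings where every vertex
guesses its own color correctly). -/
noncomputable def maxFixedPoints {V : Type*} (G : SimpleGraph V) (s : ℕ) : ℕ :=
  sSup {n : ℕ | ∃ f : V → (V → Fin s) → Fin s, IsGuessingStrategy G s f ∧
    n = Nat.card {c : V → Fin s // ∀ v, f v c = c v}}

/-- The guessing number of `G` with `s` colors: the logarithm base `s` of the
maximum number of fixed points of a strategy. -/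
noncomputable def guessingNumber {V : Type*} (G : SimpleGraph V) (s : ℕ) : ℝ :=
  Real.logb s (maxFixedPoints G s)

/-- The join `K_k ⊕ E_{n-k}`: the first `k` vertices form a clique and are joined
to all other vertices; the remaining `n - k` vertices form an independent set. -/
def cliqueJoinEmpty (n k : ℕ) : SimpleGraph (Fin n) :=
  SimpleGraph.fromRel (fun u _ => (u : ℕ) < k)

/-- The extremal number `ex(n, gn_s ≥ a)`: the maximum number of edges over all
graphs on `n` vertices whose guessing number with `s` colors is `< a`. -/
noncomputable def exGN (n s : ℕ) (a : ℝ) : ℕ :=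
  sSup {m : ℕ | ∃ G : SimpleGraph (Fin n),
    guessingNumber G s < a ∧ m = Nat.card G.edgeSet}

/-- `G` is `(gn_s ≥ a)`-saturated: `gn(G,s) < a` but adding any missing edge
raises the guessing number to at least `a`. -/
def GNSaturated {V : Type*} (G : SimpleGraph V) (s : ℕ) (a : ℝ) : Prop :=
  guessingNumber G s < a ∧
    ∀ u w : V, u ≠ w → ¬G.Adj u w →
      a ≤ guessingNumber (G ⊔ SimpleGraph.fromEdgeSet {s(u, w)}) s

/-- The saturation number `sat(n, gn_s ≥ a)`: the minimum number of edges over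
all `(gn_s ≥ a)`-saturated graphs on `n` vertices. -/
noncomputable def satGN (n s : ℕ) (a : ℝ) : ℕ :=
  sInf {m : ℕ | ∃ G : SimpleGraph (Fin n),
    GNSaturated G s a ∧ m = Nat.card G.edgeSet}

/-- The disjoint union `H + E_{n-h}` of a graph `H` on `h` vertices with `n - h`
isolated vertices, realized on `Fin n`. -/
def withIsolated {h : ℕ} (H : SimpleGraph (Fin h)) (n : ℕ) : SimpleGraph (Fin n) :=
  SimpleGraph.fromRel (fun u v =>
    ∃ (hu : (u : ℕ) < h) (hv : (v : ℕ) < h), H.Adj ⟨u, hu⟩ ⟨v, hv⟩)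

/-- `K*_{a,a}`: the complete bipartite graph `K_{a,a}` with one subdivided edge.
Vertices `0, …, a-1` are `x_1, …, x_a`; vertices `a, …, 2a-1` are `y_1, …, y_a`;
vertex `2a` is the subdivision vertex `v_0`, adjacent exactly to `x_1` and `y_1`.
The edge `x_1 y_1` is removed. -/
def Kstar (a : ℕ) : SimpleGraph (Fin (2 * a + 1)) :=
  SimpleGraph.fromRel (fun u v =>
    ((u : ℕ) < a ∧ a ≤ (v : ℕ) ∧ (v : ℕ) < 2 * a ∧ ¬((u : ℕ) = 0 ∧ (v : ℕ) = a)) ∨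
    ((u : ℕ) = 2 * a ∧ ((v : ℕ) = 0 ∨ (v : ℕ) = a)))

/-- Add `b` dominating vertices to a graph `H` on `m` vertices: the first `b`
vertices are adjacent to everything else (and each other), the remaining `m`
vertices induce a copy of `H`. -/
def withDominating {m : ℕ} (H : SimpleGraph (Fin m)) (b : ℕ) :
    SimpleGraph (Fin (b + m)) :=
  SimpleGraph.fromRel (fun u v =>
    (u : ℕ) < b ∨ (v : ℕ) < b ∨
      ∃ (hu : b ≤ (u : ℕ)) (hv : b ≤ (v : ℕ)),
        H.Adj ⟨(u : ℕ) - b, by have := u.isLt; omega⟩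
          ⟨(v : ℕ) - b, by have := v.isLt; omega⟩)

/-- `F` is a minimal graph with `gn_s ≥ a`: its guessing number with `s` colors
is at least `a`, but every proper subgraph has guessing number `< a`. -/
def MinimalGN {V : Type*} [Finite V] (F : SimpleGraph V) (s : ℕ) (a : ℝ) : Prop :=
  a ≤ guessingNumber F s ∧
    ∀ H : F.Subgraph, H ≠ ⊤ → guessingNumber H.coe s < a

/-- For all integers `s ≥ 2` and `0 ≤ k < n`, the guessing number of the join
`K_k ⊕ E_{n-k}` with `s` colors equals `k`. -/
theorem guessingNumber_cliqueJoinEmpty (s n k : ℕ) (hs : 2 ≤ s) (hk : k < n) :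
    guessingNumber (cliqueJoinEmpty n k) s = k := by
  haveI : NeZero s := ⟨by omega⟩
  have hadj : ∀ v w : Fin n, (cliqueJoinEmpty n k).Adj v w ↔
      v ≠ w ∧ ((v : ℕ) < k ∨ (w : ℕ) < k) := by
    intro v w
    simp [cliqueJoinEmpty, SimpleGraph.fromRel_adj]
  set ι : Fin k → Fin n := fun i => ⟨i, i.isLt.trans hk⟩ with hι
  set S : (Fin n → Fin s) → Fin s := fun c => ∑ i : Fin k, c (ι i) with hS
  set u₀ : Fin n := ⟨k, hk⟩ with hu₀
  set f : Fin n → (Fin n → Fin s) → Fin s := fun v c =>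
    if (v : ℕ) < k then c u₀ - (S c - c v) else S c with hf
  have hcard : Nat.card (Fin k → Fin s) = s ^ k := by
    simp [Nat.card_eq_fintype_card]
  have hsub : ∀ (v : Fin k) (c : Fin n → Fin s),
      S c - c (ι v) = ∑ i ∈ Finset.univ.erase v, c (ι i) := by
    intro v c
    have hSc : S c = ∑ i : Fin k, c (ι i) := rfl
    rw [hSc, ← Finset.add_sum_erase _ _ (Finset.mem_univ v)]
    exact add_sub_cancel_left _ _
  have hstrat : IsGuessingStrategy (cliqueJoinEmpty n k) s f := by
    intro v c₁ c₂ h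
    by_cases hv : (v : ℕ) < k
    · have h0 : c₁ u₀ = c₂ u₀ := by
        apply h
        rw [hadj]
        refine ⟨?_, Or.inl hv⟩
        simp only [hu₀, Ne, Fin.ext_iff]
        omega
      have hιv : ι ⟨(v : ℕ), hv⟩ = v := by
        simp [hι]
      have h1 : S c₁ - c₁ v = S c₂ - c₂ v := by
        rw [← hιv, hsub, hsub]
        apply Finset.sum_congr rfl
        intro i hi
        apply h
        rw [hadj]
        refine ⟨?_, Or.inl hv⟩
        have hne : i ≠ ⟨(v : ℕ), hv⟩ := Finset.ne_of_mem_erase hi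
        exact fun hvι => hne (Fin.ext (congrArg Fin.val hvι).symm)
      simp only [hf, if_pos hv, h0, h1]
    · simp only [hf, if_neg hv]
      apply Finset.sum_congr rfl
      intro i _
      apply h
      rw [hadj]
      constructor
      · simp only [Ne, Fin.ext_iff, hι]
        have := i.isLt
        omega
      · right
        simp [hι]
  have hchar : ∀ c : Fin n → Fin s,
      (∀ v, f v c = c v) ↔ ∀ v : Fin n, ¬ ((v : ℕ) < k) → c v = S c := by
    intro c
    constructor
    · intro hfix v hv
      rw [← hfix v]
      simp [hf, hv]
    · intro hiv v
      by_cases hv : (v : ℕ) < k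
      · have h0 : c u₀ = S c := hiv u₀ (by simp [hu₀])
        simp only [hf, if_pos hv, h0]
        exact sub_sub_cancel _ _
      · simp only [hf, if_neg hv]
        exact (hiv v hv).symm
  -- lower bound: explicit strategy has exactly s^k fixed points
  have := hk.le
  set of : (Fin k → Fin s) → (Fin n → Fin s) := fun a v =>
    if h : (v : ℕ) < k then a ⟨v, h⟩ else ∑ i, a i with hof
  have hofι : ∀ (a : Fin k → Fin s) (i : Fin k), of a (ι i) = a i := by
    intro a i
    simp only [hof, hι]
    rw [dif_pos i.isLt]
  have hSof : ∀ a : Fin k → Fin s, S (of a) = ∑ i, a i := by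
    intro a
    have hSa : S (of a) = ∑ i : Fin k, of a (ι i) := rfl
    rw [hSa]
    exact Finset.sum_congr rfl fun i _ => hofι a i
  have hfix_of : ∀ a : Fin k → Fin s, ∀ v, f v (of a) = of a v := by
    intro a
    rw [hchar]
    intro v hv
    rw [hSof]
    simp [hof, hv]
  have e : (Fin k → Fin s) ≃ {c : Fin n → Fin s // ∀ v, f v c = c v} :=
    { toFun := fun a => ⟨of a, hfix_of a⟩
      invFun := fun c i => c.1 (ι i)
      left_inv := by
        intro a
        funext i
        exact hofι a i
      right_inv := by
        rintro ⟨c, hc⟩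
        apply Subtype.ext
        funext v
        simp only [hof]
        split_ifs with h
        · exact congrArg c (Fin.ext rfl)
        · exact ((hchar c).mp hc v h).symm }
  have hcount : Nat.card {c : Fin n → Fin s // ∀ v, f v c = c v} = s ^ k := by
    rw [← Nat.card_congr e, hcard]
  -- upper bound
  have hub : ∀ m ∈ {m : ℕ | ∃ g : Fin n → (Fin n → Fin s) → Fin s,
      IsGuessingStrategy (cliqueJoinEmpty n k) s g ∧
      m = Nat.card {c : Fin n → Fin s // ∀ v, g v c = c v}}, m ≤ s ^ k := by
    rintro m ⟨g, hg, rfl⟩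
    have hinj : Function.Injective
        (fun (c : {c : Fin n → Fin s // ∀ v, g v c = c v}) => fun i : Fin k => c.1 (ι i)) := by
      intro c₁ c₂ hcc
      have key : ∀ u : Fin n, (u : ℕ) < k → c₁.1 u = c₂.1 u := by
        intro u hu
        have h' : c₁.1 (ι ⟨(u : ℕ), hu⟩) = c₂.1 (ι ⟨(u : ℕ), hu⟩) :=
          congrFun hcc ⟨(u : ℕ), hu⟩
        simpa [show ι ⟨(u : ℕ), hu⟩ = u from Fin.ext rfl] using h'
      apply Subtype.ext
      funext v
      by_cases hv : (v : ℕ) < k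
      · exact key v hv
      · rw [← c₁.2 v, ← c₂.2 v]
        apply hg
        intro u hu
        rw [hadj] at hu
        apply key
        rcases hu.2 with h | h
        · exact absurd h hv
        · exact h
    calc Nat.card {c : Fin n → Fin s // ∀ v, g v c = c v}
        ≤ Nat.card (Fin k → Fin s) := Nat.card_le_card_of_injective _ hinj
      _ = s ^ k := hcard
  have hmem : s ^ k ∈ {m : ℕ | ∃ g : Fin n → (Fin n → Fin s) → Fin s,
      IsGuessingStrategy (cliqueJoinEmpty n k) s g ∧
      m = Nat.card {c : Fin n → Fin s // ∀ v, g v c = c v}} :=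
    ⟨f, hstrat, hcount.symm⟩
  have hmax : maxFixedPoints (cliqueJoinEmpty n k) s = s ^ k := by
    rw [maxFixedPoints]
    exact le_antisymm (csSup_le ⟨_, hmem⟩ hub) (le_csSup ⟨s ^ k, hub⟩ hmem)
  rw [guessingNumber, hmax]
  have hs1 : (1 : ℝ) < (s : ℝ) := by
    have : (2 : ℝ) ≤ (s : ℝ) := by exact_mod_cast hs
    linarith
  rw [show ((s ^ k : ℕ) : ℝ) = (s : ℝ) ^ k by push_cast; ring,
    Real.logb_pow, Real.logb_self_eq_one hs1, mul_one]
end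

section
/- Let s ≥ 2 be an integer, let a be a real number with a > 0, let k = ⌈a⌉ − 1, and let n be an integer with n > ⌈a⌉. Then the extremal number satisfies ex(n, gn_s ≥ a) = C(n,2) − C(n−k,2); that is, the maximum number of edges over all graphs on n vertices with guessing number gn(G,s) < a equals C(n,2) − C(n−k,2). -/
open SimpleGraph

open Finset

section Aux

variable {n s : ℕ}

lemma fixed_card_le (f : Fin n → (Fin n → Fin s) → Fin s) :
    Nat.card {c : Fin n → Fin s // ∀ v, f v c = c v} ≤ s ^ n := by
  calc Nat.card {c : Fin n → Fin s // ∀ v, f v c = c v}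
      ≤ Nat.card (Fin n → Fin s) :=
        Nat.card_le_card_of_injective _ Subtype.val_injective
    _ = s ^ n := by simp [Nat.card_eq_fintype_card]

lemma mfp_bddAbove (G : SimpleGraph (Fin n)) :
    BddAbove {m : ℕ | ∃ f : Fin n → (Fin n → Fin s) → Fin s, IsGuessingStrategy G s f ∧
      m = Nat.card {c : Fin n → Fin s // ∀ v, f v c = c v}} := by
  refine ⟨s ^ n, fun m hm => ?_⟩
  obtain ⟨f, _, rfl⟩ := hm
  exact fixed_card_le f

lemma le_mfp (G : SimpleGraph (Fin n)) (f : Fin n → (Fin n → Fin s) → Fin s)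
    (hf : IsGuessingStrategy G s f) :
    Nat.card {c : Fin n → Fin s // ∀ v, f v c = c v} ≤ maxFixedPoints G s :=
  le_csSup (mfp_bddAbove G) ⟨f, hf, rfl⟩

lemma mfp_le [NeZero s] (G : SimpleGraph (Fin n)) {M : ℕ}
    (h : ∀ f : Fin n → (Fin n → Fin s) → Fin s, IsGuessingStrategy G s f →
      Nat.card {c : Fin n → Fin s // ∀ v, f v c = c v} ≤ M) :
    maxFixedPoints G s ≤ M := by
  refine csSup_le ⟨_, (fun _ _ => (0 : Fin s)), fun _ _ _ _ => rfl, rfl⟩ ?_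
  rintro m ⟨f, hf, rfl⟩
  exact h f hf

lemma gn_le_of_mfp_le (hs : 2 ≤ s) {G : SimpleGraph (Fin n)} {j : ℕ}
    (h : maxFixedPoints G s ≤ s ^ j) : guessingNumber G s ≤ j := by
  have hs1 : (1 : ℝ) < s := by exact_mod_cast hs
  unfold guessingNumber
  rcases Nat.eq_zero_or_pos (maxFixedPoints G s) with h0 | h0
  · rw [h0]; simpa using (Nat.cast_nonneg j)
  · have h1 : Real.logb s (maxFixedPoints G s) ≤ Real.logb s ((s : ℝ) ^ j) := by
      refine Real.logb_le_logb_of_le hs1 (by exact_mod_cast h0) ?_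
      exact_mod_cast h
    calc Real.logb s (maxFixedPoints G s) ≤ Real.logb s ((s : ℝ) ^ j) := h1
      _ = j := by rw [Real.logb_pow, Real.logb_self_eq_one hs1, mul_one]

lemma le_gn_of_le_mfp (hs : 2 ≤ s) {G : SimpleGraph (Fin n)} {j : ℕ}
    (h : s ^ j ≤ maxFixedPoints G s) : (j : ℝ) ≤ guessingNumber G s := by
  have hs1 : (1 : ℝ) < s := by exact_mod_cast hs
  unfold guessingNumber
  have h1 : Real.logb s ((s : ℝ) ^ j) ≤ Real.logb s (maxFixedPoints G s) := by
    refine Real.logb_le_logb_of_le hs1 (by positivity) ?_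
    exact_mod_cast h
  calc (j : ℝ) = Real.logb s ((s : ℝ) ^ j) := by
        rw [Real.logb_pow, Real.logb_self_eq_one hs1, mul_one]
    _ ≤ _ := h1

end Aux

section CJE

variable {n s k : ℕ}

lemma cje_adj {u v : Fin n} {k : ℕ} :
    (cliqueJoinEmpty n k).Adj u v ↔ u ≠ v ∧ ((u : ℕ) < k ∨ (v : ℕ) < k) := by
  simp [cliqueJoinEmpty, SimpleGraph.fromRel_adj]

lemma mfp_cje_le [NeZero s] (hk : k ≤ n) :
    maxFixedPoints (cliqueJoinEmpty n k) s ≤ s ^ k := by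
  refine mfp_le _ (fun f hf => ?_)
  have hinj : Function.Injective
      (fun c : {c : Fin n → Fin s // ∀ v, f v c = c v} =>
        (fun j : Fin k => c.1 ⟨j, lt_of_lt_of_le j.2 hk⟩ : Fin k → Fin s)) := by
    rintro ⟨c₁, h₁⟩ ⟨c₂, h₂⟩ hg
    simp only [Subtype.mk_eq_mk]
    funext v
    by_cases hv : (v : ℕ) < k
    · have := congrFun hg ⟨v, hv⟩
      simpa using this
    · have e1 : c₁ v = f v c₁ := (h₁ v).symm
      have e2 : f v c₂ = c₂ v := h₂ v
      rw [e1, ← e2]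
      refine hf v c₁ c₂ (fun u hu => ?_)
      rw [cje_adj] at hu
      have huk : (u : ℕ) < k := by omega
      have := congrFun hg ⟨u, huk⟩
      simpa using this
  calc Nat.card {c : Fin n → Fin s // ∀ v, f v c = c v}
      ≤ Nat.card (Fin k → Fin s) := Nat.card_le_card_of_injective _ hinj
    _ = s ^ k := by simp [Nat.card_eq_fintype_card]

lemma two_mul_choose_two (n : ℕ) : 2 * n.choose 2 = n * (n - 1) := by
  cases n with
  | zero => simp
  | succ p =>
    have hd : 2 ∣ (p + 1) * p := by
      rcases Nat.even_or_odd p with h | h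
      · exact Dvd.dvd.mul_left h.two_dvd _
      · exact Dvd.dvd.mul_right (h.add_one).two_dvd _
    rw [Nat.choose_two_right, Nat.succ_sub_one, Nat.mul_div_cancel' hd]

lemma card_filter_le (n k : ℕ) (hk : k ≤ n) :
    #((univ : Finset (Fin n)).filter (fun v : Fin n => k ≤ (v : ℕ))) = n - k := by
  rw [← Fintype.card_fin (n - k), ← Finset.card_univ]
  refine Finset.card_bij'
    (fun v hv => (⟨(v : ℕ) - k, by
      simp only [Finset.mem_filter] at hv
      have := v.isLt; omega⟩ : Fin (n - k)))
    (fun w _ => (⟨(w : ℕ) + k, by have := w.isLt; omega⟩ : Fin n))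
    ?_ ?_ ?_ ?_
  · intro a _; exact mem_univ _
  · intro a _; simp only [Finset.mem_filter]; exact ⟨mem_univ _, by simp⟩
  · intro a ha; simp only [Finset.mem_filter] at ha; ext; simp; omega
  · intro a _; ext; simp

lemma cje_card_edges (hk : k ≤ n) :
    Nat.card (cliqueJoinEmpty n k).edgeSet = n.choose 2 - (n - k).choose 2 := by
  classical
  have hAcard : #((univ : Finset (Fin n)).filter (fun v : Fin n => k ≤ (v : ℕ))) = n - k :=
    card_filter_le n k hk
  set A : Finset (Fin n) := (univ : Finset (Fin n)).filter (fun v : Fin n => k ≤ (v : ℕ)) with hA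
  have hsub : A.offDiag ⊆ (univ : Finset (Fin n)).offDiag := by
    intro p hp
    simp only [Finset.mem_offDiag] at hp ⊢
    exact ⟨mem_univ _, mem_univ _, hp.2.2⟩
  have hfilt : (univ.filter fun (x, y) => (cliqueJoinEmpty n k).Adj x y)
      = (univ : Finset (Fin n)).offDiag \ A.offDiag := by
    ext p
    obtain ⟨x, y⟩ := p
    simp only [Finset.mem_filter, mem_univ, true_and, Finset.mem_sdiff, Finset.mem_offDiag,
      cje_adj, hA]
    constructor
    · intro h
      refine ⟨h.1, fun hc => ?_⟩
      obtain ⟨h1, h2, _⟩ := hc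
      rcases h.2 with h3 | h3 <;> omega
    · intro h
      refine ⟨h.1, ?_⟩
      by_cases hx : k ≤ (x : ℕ)
      · by_cases hy : k ≤ (y : ℕ)
        · exact absurd ⟨hx, hy, h.1⟩ h.2
        · omega
      · omega
  have h2 : 2 * #(cliqueJoinEmpty n k).edgeFinset = n * (n - 1) - (n - k) * (n - k - 1) := by
    rw [SimpleGraph.two_mul_card_edgeFinset, hfilt, Finset.card_sdiff_of_subset hsub,
      Finset.offDiag_card, Finset.offDiag_card, hAcard, Finset.card_univ, Fintype.card_fin]
    have e1 : n * (n - 1) = n * n - n := by cases n <;> simp [Nat.mul_succ, Nat.succ_sub_one] <;> ring_nf <;> omega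
    have e2 : (n - k) * (n - k - 1) = (n - k) * (n - k) - (n - k) := by
      generalize n - k = m
      cases m <;> simp [Nat.mul_succ, Nat.succ_sub_one] <;> ring_nf <;> omega
    omega
  have hc1 := two_mul_choose_two n
  have hc2 := two_mul_choose_two (n - k)
  have hcard : Nat.card (cliqueJoinEmpty n k).edgeSet = #(cliqueJoinEmpty n k).edgeFinset := by
    rw [Nat.card_eq_fintype_card, SimpleGraph.edgeFinset, Set.toFinset_card]
  have hle : (n - k) * (n - k - 1) ≤ n * (n - 1) := by
    apply Nat.mul_le_mul <;> omega
  omega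

end CJE

section Partition

variable {n s : ℕ}

def PartProps (G : SimpleGraph (Fin n)) (P : Finset (Finset (Fin n))) : Prop :=
  (∀ p ∈ P, p.Nonempty ∧ G.IsClique (p : Set (Fin n))) ∧
    ∀ v : Fin n, ∃! p, p ∈ P ∧ v ∈ p

lemma part_unique {G : SimpleGraph (Fin n)} {P : Finset (Finset (Fin n))}
    (hP : PartProps G P) {v : Fin n} {p q : Finset (Fin n)}
    (hp : p ∈ P) (hvp : v ∈ p) (hq : q ∈ P) (hvq : v ∈ q) : p = q := by
  obtain ⟨r, _, hu⟩ := hP.2 v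
  rw [hu p ⟨hp, hvp⟩, hu q ⟨hq, hvq⟩]

lemma partProps_card_le {G : SimpleGraph (Fin n)} {P : Finset (Finset (Fin n))}
    (hP : PartProps G P) : P.card ≤ n := by
  classical
  have hrep : ∀ p : {p // p ∈ P}, ∃ v : Fin n, v ∈ p.1 :=
    fun p => (hP.1 p.1 p.2).1
  choose rep hrepmem using hrep
  have hinj : Function.Injective rep := by
    intro p q hpq
    have := part_unique hP p.2 (hrepmem p) q.2 (hpq ▸ hrepmem q)
    exact Subtype.ext this
  calc P.card = Fintype.card {p // p ∈ P} := (Fintype.card_coe P).symm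
    _ ≤ Fintype.card (Fin n) := Fintype.card_le_of_injective rep hinj
    _ = n := Fintype.card_fin n

lemma mfp_ge_of_partition (hs : 2 ≤ s) {G : SimpleGraph (Fin n)}
    {P : Finset (Finset (Fin n))} (hP : PartProps G P) :
    s ^ (n - P.card) ≤ maxFixedPoints G s := by
  classical
  haveI : NeZero s := ⟨by omega⟩
  choose part hpart huniq using hP.2
  have hmem : ∀ v, part v ∈ P := fun v => (hpart v).1
  have hvmem : ∀ v, v ∈ part v := fun v => (hpart v).2
  -- the color equivalence
  let e : Fin s ≃ ZMod s := Fintype.equivOfCardEq (by simp [ZMod.card])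
  -- the strategy
  let f : Fin n → (Fin n → Fin s) → Fin s :=
    fun v c => e.symm (- ∑ u ∈ (part v).erase v, e (c u))
  have hf : IsGuessingStrategy G s f := by
    intro v c₁ c₂ h
    have : ∑ u ∈ (part v).erase v, e (c₁ u) = ∑ u ∈ (part v).erase v, e (c₂ u) := by
      refine Finset.sum_congr rfl (fun u hu => ?_)
      rw [Finset.mem_erase] at hu
      have hadj : G.Adj v u :=
        (hP.1 (part v) (hmem v)).2 (by exact_mod_cast hvmem v)
          (by exact_mod_cast hu.2) (Ne.symm hu.1)
      rw [h u hadj]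
    simp only [f, this]
  -- fixed points are exactly colorings whose part-sums vanish
  have hfix : ∀ c : Fin n → Fin s,
      (∀ v, f v c = c v) ↔ ∀ p ∈ P, ∑ u ∈ p, e (c u) = 0 := by
    intro c
    constructor
    · intro h p hp
      obtain ⟨v, hv⟩ := (hP.1 p hp).1
      have hpv : p = part v := huniq v p ⟨hp, hv⟩
      have := h v
      have h2 : e (c v) = - ∑ u ∈ (part v).erase v, e (c u) := by
        rw [← this]; simp [f]
      rw [hpv, ← Finset.add_sum_erase _ _ (hvmem v), h2]
      ring
    · intro h v
      have h2 := h (part v) (hmem v)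
      rw [← Finset.add_sum_erase _ _ (hvmem v)] at h2
      have : e (c v) = - ∑ u ∈ (part v).erase v, e (c u) := by
        linear_combination (norm := module) h2
      simp [f, ← this]
  -- the sum homomorphism
  let φ : (Fin n → ZMod s) →+ ({p // p ∈ P} → ZMod s) :=
    { toFun := fun d p => ∑ u ∈ p.1, d u
      map_zero' := by funext p; simp
      map_add' := by intro d₁ d₂; funext p; simp [Finset.sum_add_distrib] }
  have hsurj : Function.Surjective φ := by
    intro g
    choose rep hrepmem using fun p : {p // p ∈ P} => (hP.1 p.1 p.2).1
    refine ⟨fun v => if hv : ∃ p : {p // p ∈ P}, rep p = v then g hv.choose else 0, ?_⟩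
    funext p
    show (∑ u ∈ p.1, _) = g p
    rw [Finset.sum_eq_single (rep p)]
    · have hex : ∃ q : {p // p ∈ P}, rep q = rep p := ⟨p, rfl⟩
      simp only [dif_pos hex]
      have hq := hex.choose_spec
      have : hex.choose = p := by
        refine Subtype.ext (part_unique hP hex.choose.2 ?_ p.2 (hrepmem p))
        have h5 := hrepmem hex.choose
        rwa [hq] at h5
      rw [this]
    · intro u hu hne
      rw [dif_neg]
      rintro ⟨q, rfl⟩
      have : q = p := Subtype.ext (part_unique hP q.2 (hrepmem q) p.2 hu)
      exact hne (by rw [this])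
    · intro hmem'
      exact absurd (hrepmem p) hmem'
  -- cardinality of the kernel
  have hcard1 : Nat.card (Fin n → ZMod s) =
      Nat.card ({p // p ∈ P} → ZMod s) * Nat.card φ.ker := by
    rw [AddSubgroup.card_eq_card_quotient_mul_card_addSubgroup φ.ker]
    congr 1
    exact Nat.card_congr (QuotientAddGroup.quotientKerEquivOfSurjective φ hsurj).toEquiv
  have hd : Nat.card (Fin n → ZMod s) = s ^ n := by
    simp [Nat.card_fun, Nat.card_zmod, Nat.card_eq_fintype_card]
  have hc : Nat.card ({p // p ∈ P} → ZMod s) = s ^ P.card := by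
    simp [Nat.card_fun, Nat.card_zmod, Nat.card_eq_fintype_card, Fintype.card_coe]
  have htn : P.card ≤ n := partProps_card_le hP
  have hker : Nat.card φ.ker = s ^ (n - P.card) := by
    have : s ^ P.card * Nat.card φ.ker = s ^ P.card * s ^ (n - P.card) := by
      rw [← pow_add, Nat.add_sub_cancel' htn, ← hd, hcard1, hc]
    exact Nat.eq_of_mul_eq_mul_left (by positivity) this
  -- fixed points ≃ kernel
  have hequiv : {c : Fin n → Fin s // ∀ v, f v c = c v} ≃ φ.ker := by
    refine Equiv.subtypeEquiv (Equiv.piCongrRight (fun _ => e)) (fun c => ?_)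
    rw [hfix c, AddMonoidHom.mem_ker, funext_iff]
    constructor
    · intro h p
      simpa [φ] using h p.1 p.2
    · intro h p hp
      simpa [φ] using h ⟨p, hp⟩
  have := le_mfp G f hf
  rw [Nat.card_congr hequiv, hker] at this
  exact this

end Partition

section MinPart

variable {n : ℕ}

lemma singleton_partProps (G : SimpleGraph (Fin n)) :
    PartProps G ((univ : Finset (Fin n)).image (fun v => {v})) := by
  classical
  constructor
  · intro p hp
    simp only [Finset.mem_image] at hp
    obtain ⟨v, _, rfl⟩ := hp
    exact ⟨⟨v, Finset.mem_singleton_self v⟩, by simp [SimpleGraph.isClique_singleton]⟩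
  · intro v
    refine ⟨{v}, ⟨Finset.mem_image.2 ⟨v, mem_univ _, rfl⟩, Finset.mem_singleton_self v⟩, ?_⟩
    rintro q ⟨hq, hvq⟩
    simp only [Finset.mem_image] at hq
    obtain ⟨u, _, rfl⟩ := hq
    rw [Finset.mem_singleton] at hvq
    rw [hvq]

lemma exists_min_partition (G : SimpleGraph (Fin n)) :
    ∃ P : Finset (Finset (Fin n)), PartProps G P ∧
      ∀ p ∈ P, ∀ q ∈ P, p ≠ q → ¬ G.IsClique ((p ∪ q : Finset (Fin n)) : Set (Fin n)) := by
  classical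
  set S : Set ℕ := {t | ∃ P : Finset (Finset (Fin n)), PartProps G P ∧ P.card = t} with hS
  have hSne : S.Nonempty := ⟨_, _, singleton_partProps G, rfl⟩
  obtain ⟨P, hP, hPcard⟩ := Nat.sInf_mem hSne
  refine ⟨P, hP, ?_⟩
  intro p hp q hq hpq hclique
  -- build a smaller partition by merging p and q
  have hpq_notmem : p ∪ q ∉ P := by
    intro hmem
    obtain ⟨v, hv⟩ := (hP.1 q hq).1
    have h1 : q = p ∪ q := part_unique hP hq hv hmem (Finset.mem_union_right _ hv)
    obtain ⟨u, hu⟩ := (hP.1 p hp).1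
    have h2 : p = p ∪ q := part_unique hP hp hu hmem (Finset.mem_union_left _ hu)
    exact hpq (h2.trans h1.symm)
  set P' : Finset (Finset (Fin n)) := insert (p ∪ q) ((P.erase p).erase q) with hP'
  have hqp : q ∈ P.erase p := Finset.mem_erase.2 ⟨Ne.symm hpq, hq⟩
  have hcard' : P'.card = P.card - 1 := by
    rw [hP', Finset.card_insert_of_notMem (by
      intro hmem
      exact hpq_notmem (Finset.mem_of_mem_erase (Finset.mem_of_mem_erase hmem)))]
    rw [Finset.card_erase_of_mem hqp, Finset.card_erase_of_mem hp]
    have h2 : 2 ≤ P.card := Finset.one_lt_card.2 ⟨p, hp, q, hq, hpq⟩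
    omega
  have hmem' : ∀ r ∈ P', r = p ∪ q ∨ (r ∈ P ∧ r ≠ p ∧ r ≠ q) := by
    intro r hr
    rw [hP', Finset.mem_insert] at hr
    rcases hr with hr | hr
    · exact Or.inl hr
    · rw [Finset.mem_erase, Finset.mem_erase] at hr
      exact Or.inr ⟨hr.2.2, hr.2.1, hr.1⟩
  have hprops' : PartProps G P' := by
    constructor
    · intro r hr
      rcases hmem' r hr with rfl | ⟨hrP, _, _⟩
      · obtain ⟨u, hu⟩ := (hP.1 p hp).1
        exact ⟨⟨u, Finset.mem_union_left _ hu⟩, by exact_mod_cast hclique⟩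
      · exact hP.1 r hrP
    · intro v
      by_cases hv : v ∈ p ∪ q
      · refine ⟨p ∪ q, ⟨Finset.mem_insert_self _ _, hv⟩, ?_⟩
        rintro r ⟨hr, hvr⟩
        rcases hmem' r hr with rfl | ⟨hrP, hrp, hrq⟩
        · rfl
        · exfalso
          rcases Finset.mem_union.1 hv with h | h
          · exact hrp (part_unique hP hrP hvr hp h)
          · exact hrq (part_unique hP hrP hvr hq h)
      · obtain ⟨r₀, ⟨hr₀, hvr₀⟩, hu₀⟩ := hP.2 v
        have hr₀p : r₀ ≠ p := fun h => hv (Finset.mem_union_left _ (h ▸ hvr₀))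
        have hr₀q : r₀ ≠ q := fun h => hv (Finset.mem_union_right _ (h ▸ hvr₀))
        refine ⟨r₀, ⟨?_, hvr₀⟩, ?_⟩
        · rw [hP']
          exact Finset.mem_insert_of_mem
            (Finset.mem_erase.2 ⟨hr₀q, Finset.mem_erase.2 ⟨hr₀p, hr₀⟩⟩)
        · rintro r ⟨hr, hvr⟩
          rcases hmem' r hr with rfl | ⟨hrP, _, _⟩
          · exact absurd hvr hv
          · exact hu₀ r ⟨hrP, hvr⟩
  have h2 : 2 ≤ P.card := Finset.one_lt_card.2 ⟨p, hp, q, hq, hpq⟩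
  have : P.card - 1 ∈ S := ⟨P', hprops', hcard'⟩
  have := Nat.sInf_le this
  omega

end MinPart

section Count

variable {n : ℕ}

lemma exists_partition_card_bound (G : SimpleGraph (Fin n)) :
    ∃ P : Finset (Finset (Fin n)), PartProps G P ∧
      P.card * (P.card - 1) ≤ 2 * Nat.card Gᶜ.edgeSet := by
  classical
  obtain ⟨P, hP, hmin⟩ := exists_min_partition G
  refine ⟨P, hP, ?_⟩
  rcases Nat.lt_or_ge P.card 2 with h2 | h2
  · interval_cases h : P.card <;> simp
  · -- P is nonempty, so n ≥ 1
    obtain ⟨p₀, hp₀⟩ := Finset.card_pos.1 (show 0 < P.card by omega)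
    obtain ⟨v₀, _⟩ := (hP.1 p₀ hp₀).1
    -- non-edge witnesses for pairs of distinct parts
    have hwit : ∀ p ∈ P, ∀ q ∈ P, p ≠ q →
        ∃ z : Fin n × Fin n, z.1 ∈ p ∧ z.2 ∈ q ∧ Gᶜ.Adj z.1 z.2 := by
      intro p hp q hq hpq
      have hnc := hmin p hp q hq hpq
      rw [SimpleGraph.IsClique, Set.Pairwise] at hnc
      push_neg at hnc
      obtain ⟨x, hx, y, hy, hxy, hnadj⟩ := hnc
      rw [Finset.coe_union, Set.mem_union] at hx hy
      simp only [Finset.mem_coe] at hx hy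
      have hadjc : Gᶜ.Adj x y := ⟨hxy, hnadj⟩
      rcases hx with hx | hx <;> rcases hy with hy | hy
      · exact absurd ((hP.1 p hp).2 (by exact_mod_cast hx) (by exact_mod_cast hy) hxy) hnadj
      · exact ⟨(x, y), hx, hy, hadjc⟩
      · exact ⟨(y, x), hy, hx, hadjc.symm⟩
      · exact absurd ((hP.1 q hq).2 (by exact_mod_cast hx) (by exact_mod_cast hy) hxy) hnadj
    -- the injection
    set F : Finset (Fin n) × Finset (Fin n) → Fin n × Fin n :=
      fun pq => if h : ∃ z : Fin n × Fin n, z.1 ∈ pq.1 ∧ z.2 ∈ pq.2 ∧ Gᶜ.Adj z.1 z.2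
        then h.choose else (v₀, v₀) with hF
    have hcardle : P.offDiag.card ≤
        #((univ : Finset (Fin n × Fin n)).filter (fun z => Gᶜ.Adj z.1 z.2)) := by
      refine Finset.card_le_card_of_injOn F ?_ ?_
      · intro pq hpq
        rw [Finset.mem_coe, Finset.mem_offDiag] at hpq
        obtain ⟨hp, hq, hne⟩ := hpq
        have hex := hwit _ hp _ hq hne
        rw [Finset.mem_coe, Finset.mem_filter]
        refine ⟨mem_univ _, ?_⟩
        simp only [hF, dif_pos hex]
        exact hex.choose_spec.2.2
      · intro pq hpq pq' hpq' heq
        rw [Finset.coe_offDiag, Set.mem_offDiag] at hpq hpq'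
        obtain ⟨hp, hq, hne⟩ := hpq
        obtain ⟨hp', hq', hne'⟩ := hpq'
        have hex := hwit _ hp _ hq hne
        have hex' := hwit _ hp' _ hq' hne'
        have hz := hex.choose_spec
        have hz' := hex'.choose_spec
        rw [hF] at heq
        simp only [dif_pos hex, dif_pos hex'] at heq
        have h1 : pq.1 = pq'.1 := by
          refine part_unique hP hp hz.1 hp' ?_
          rw [heq]; exact hz'.1
        have h2 : pq.2 = pq'.2 := by
          refine part_unique hP hq hz.2.1 hq' ?_
          rw [heq]; exact hz'.2.1
        exact Prod.ext h1 h2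
    have hfiltcard :
        #((univ : Finset (Fin n × Fin n)).filter (fun z => Gᶜ.Adj z.1 z.2))
          = 2 * Nat.card Gᶜ.edgeSet := by
      have := SimpleGraph.two_mul_card_edgeFinset (G := Gᶜ)
      rw [Nat.card_eq_fintype_card, ← Set.toFinset_card]
      exact this.symm
    rw [Finset.offDiag_card] at hcardle
    have : P.card * (P.card - 1) = P.card * P.card - P.card := by
      cases h : P.card with
      | zero => simp
      | succ m => simp [Nat.mul_succ, Nat.succ_sub_one]
    omega

end Count

section Main

variable {n s : ℕ}

lemma compl_edge_count (G : SimpleGraph (Fin n)) :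
    2 * Nat.card G.edgeSet + 2 * Nat.card Gᶜ.edgeSet = n * n - n := by
  classical
  have h1 := SimpleGraph.two_mul_card_edgeFinset (G := G)
  have h2 := SimpleGraph.two_mul_card_edgeFinset (G := Gᶜ)
  have hc1 : Nat.card G.edgeSet = #G.edgeFinset := by
    rw [Nat.card_eq_fintype_card, SimpleGraph.edgeFinset, Set.toFinset_card]
  have hc2 : Nat.card Gᶜ.edgeSet = #Gᶜ.edgeFinset := by
    rw [Nat.card_eq_fintype_card, SimpleGraph.edgeFinset, Set.toFinset_card]
  rw [hc1, hc2, h1, h2]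
  have hsplit : ((univ : Finset (Fin n × Fin n)).filter fun (x, y) => G.Adj x y)
      = (univ : Finset (Fin n)).offDiag.filter (fun z => G.Adj z.1 z.2) := by
    ext z
    obtain ⟨x, y⟩ := z
    simp only [Finset.mem_filter, mem_univ, true_and, Finset.mem_offDiag]
    exact ⟨fun h => ⟨h.ne, h⟩, fun h => h.2⟩
  have hsplit2 : ((univ : Finset (Fin n × Fin n)).filter fun (x, y) => Gᶜ.Adj x y)
      = (univ : Finset (Fin n)).offDiag.filter (fun z => ¬ G.Adj z.1 z.2) := by
    ext z
    obtain ⟨x, y⟩ := z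
    simp only [Finset.mem_filter, mem_univ, true_and, Finset.mem_offDiag,
      SimpleGraph.compl_adj]
  rw [hsplit, hsplit2, Finset.card_filter_add_card_filter_not]
  rw [Finset.offDiag_card, Finset.card_univ, Fintype.card_fin]

lemma edge_le_of_gn_lt (hs : 2 ≤ s) {a : ℝ} {k n : ℕ}
    (hk : (k : ℤ) = ⌈a⌉ - 1) (hn : ⌈a⌉ < (n : ℤ))
    {G : SimpleGraph (Fin n)} (hG : guessingNumber G s < a) :
    Nat.card G.edgeSet ≤ n.choose 2 - (n - k).choose 2 := by
  by_contra hcon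
  push_neg at hcon
  have hceil : ⌈a⌉ = (k : ℤ) + 1 := by omega
  have hkn : k + 1 < n := by
    rw [hceil] at hn
    exact_mod_cast hn
  set m := n - k with hm
  have hm2 : 2 ≤ m := by omega
  obtain ⟨P, hP, hPbound⟩ := exists_partition_card_bound G
  set t := P.card with ht
  have htot := compl_edge_count G
  have hcn := two_mul_choose_two n
  have hcm := two_mul_choose_two m
  have hmle : m * (m - 1) ≤ n * (n - 1) := Nat.mul_le_mul (by omega) (by omega)
  have hnn : n * (n - 1) = n * n - n := by
    cases n with
    | zero => simp
    | succ p => simp [Nat.mul_succ, Nat.succ_sub_one]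
  -- 2 * e(Gᶜ) ≤ m * (m-1) - 2
  have hcompl : 2 * Nat.card Gᶜ.edgeSet ≤ m * (m - 1) - 2 := by omega
  have htm : t < m := by
    by_contra hge
    push_neg at hge
    have : m * (m - 1) ≤ t * (t - 1) := Nat.mul_le_mul (by omega) (by omega)
    omega
  have hmfp := mfp_ge_of_partition hs hP
  have hpow : s ^ (k + 1) ≤ s ^ (n - t) := Nat.pow_le_pow_right (by omega) (by omega)
  have hgn : ((k + 1 : ℕ) : ℝ) ≤ guessingNumber G s :=
    le_gn_of_le_mfp hs (le_trans hpow hmfp)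
  have hak : a ≤ ((k + 1 : ℕ) : ℝ) := by
    calc a ≤ (⌈a⌉ : ℝ) := Int.le_ceil a
      _ = ((k + 1 : ℕ) : ℝ) := by rw [hceil]; push_cast; ring
  linarith

end Main

/-- For `s ≥ 2`, `a > 0`, `k = ⌈a⌉ - 1` and `n > ⌈a⌉`, the extremal number is
`ex(n, gn_s ≥ a) = C(n,2) - C(n-k,2)`. -/
theorem exGN_eq (s : ℕ) (hs : 2 ≤ s) (a : ℝ) (ha : 0 < a) (k n : ℕ)
    (hk : (k : ℤ) = ⌈a⌉ - 1) (hn : ⌈a⌉ < (n : ℤ)) :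
    exGN n s a = n.choose 2 - (n - k).choose 2 := by

  haveI : NeZero s := ⟨by omega⟩
  have hceil : ⌈a⌉ = (k : ℤ) + 1 := by omega
  have hkn : k + 1 < n := by
    rw [hceil] at hn
    exact_mod_cast hn
  have hmem : n.choose 2 - (n - k).choose 2 ∈ {m : ℕ | ∃ G : SimpleGraph (Fin n),
      guessingNumber G s < a ∧ m = Nat.card G.edgeSet} := by
    refine ⟨cliqueJoinEmpty n k, ?_, (cje_card_edges (by omega)).symm⟩
    have h1 : guessingNumber (cliqueJoinEmpty n k) s ≤ k :=
      gn_le_of_mfp_le hs (mfp_cje_le (by omega))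
    have h2 : (k : ℝ) < a := by
      have h3 : ((⌈a⌉ : ℤ) : ℝ) < a + 1 := Int.ceil_lt_add_one a
      rw [hceil] at h3
      push_cast at h3
      linarith
    linarith
  have hub : ∀ m ∈ {m : ℕ | ∃ G : SimpleGraph (Fin n),
      guessingNumber G s < a ∧ m = Nat.card G.edgeSet},
      m ≤ n.choose 2 - (n - k).choose 2 := by
    rintro m ⟨G, hG, rfl⟩
    exact edge_le_of_gn_lt hs hk hn hG
  exact le_antisymm (csSup_le ⟨_, hmem⟩ hub)
    (le_csSup ⟨n.choose 2 - (n - k).choose 2, hub⟩ hmem)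
end

section
/- Let s ≥ 2 be an integer, let a be a real number with a > 0, let k = ⌈a⌉ − 1, and let n be an integer with n > ⌈a⌉. If G is a graph on n vertices with gn(G,s) < a and exactly C(n,2) − C(n−k,2) edges, then G is isomorphic to K_k ⊕ E_{n−k}. In other words, the family of extremal graphs Ex(n, gn_s ≥ a) consists of the single graph K_k ⊕ E_{n−k}. -/
open SimpleGraph

section AuxLemmas
open Finset

lemma lemA {V : Type} [Fintype V] [DecidableEq V] (H : SimpleGraph V) [DecidableRel H.Adj]
    (t : ℕ) (h : ¬ H.Colorable t) : (t+1).choose 2 ≤ H.edgeFinset.card := by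
  classical
  have hex : ∃ n, H.Colorable n := ⟨Fintype.card V, H.colorable_of_fintype⟩
  set c := Nat.find hex with hcdef
  have hcc : H.Colorable c := Nat.find_spec hex
  have hmin : ∀ m, m < c → ¬ H.Colorable m := fun m hm => Nat.find_min hex hm
  have htc : t + 1 ≤ c := by
    by_contra hlt
    push_neg at hlt
    exact h (hcc.mono (by omega))
  obtain ⟨C⟩ := hcc
  have key : ∀ i j : Fin c, i ≠ j → ∃ u w, H.Adj u w ∧ C u = i ∧ C w = j := by
    intro i j hij
    by_contra hno
    push_neg at hno
    have hno' : ∀ u w, H.Adj u w → C u = i → C w ≠ j := by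
      intro u w huw hu hw
      exact (hno u w huw hu) hw
    let C₂ : H.Coloring {x : Fin c // x ≠ j} :=
      Coloring.mk (fun u => if h : C u = j then ⟨i, hij⟩ else ⟨C u, h⟩) (by
        intro u w huw hval
        by_cases hu : C u = j <;> by_cases hw : C w = j
        · exact C.valid huw (hu.trans hw.symm)
        · simp only [hu, hw, dif_pos, dif_neg] at hval
          have : C w = i := (Subtype.ext_iff.mp hval).symm
          exact hno' w u huw.symm this hu
        · simp only [hu, hw, dif_pos, dif_neg] at hval
          have : C u = i := Subtype.ext_iff.mp hval
          exact hno' u w huw this hw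
        · simp only [hu, hw, dif_neg] at hval
          exact C.valid huw (Subtype.ext_iff.mp hval))
    have hcard : Fintype.card {x : Fin c // x ≠ j} = c - 1 := by
      have := Fintype.card_subtype_compl (fun x : Fin c => x = j)
      simpa [Fintype.card_subtype_eq] using this
    have hcol : H.Colorable (c-1) := by
      have := C₂.colorable
      rwa [hcard] at this
    have : ¬ H.Colorable (c-1) := hmin (c-1) (by omega)
    exact this hcol
  have hF : ∀ e : H.edgeSet, ¬ (Sym2.map C e.1).IsDiag := by
    rintro ⟨e, he⟩
    revert he
    refine Sym2.ind (fun u w hmem => ?_) e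
    rw [SimpleGraph.mem_edgeSet] at hmem
    simp only [Sym2.map_pair_eq, Sym2.mk_isDiag_iff]
    exact C.valid hmem
  have hsurj : Function.Surjective (fun e : H.edgeSet =>
      (⟨Sym2.map C e.1, hF e⟩ : {z : Sym2 (Fin c) // ¬ z.IsDiag})) := by
    rintro ⟨z, hz⟩
    revert hz
    refine Sym2.ind (fun i j hz => ?_) z
    have hij : i ≠ j := by simpa [Sym2.mk_isDiag_iff] using hz
    obtain ⟨u, w, huw, hu, hw⟩ := key i j hij
    exact ⟨⟨s(u,w), huw⟩, by simp [Sym2.map_pair_eq, hu, hw]⟩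
  have hle : Fintype.card {z : Sym2 (Fin c) // ¬ z.IsDiag} ≤ Fintype.card H.edgeSet :=
    Fintype.card_le_of_surjective _ hsurj
  rw [Sym2.card_subtype_not_diag] at hle
  simp only [Fintype.card_fin] at hle
  calc (t+1).choose 2 ≤ c.choose 2 := Nat.choose_le_choose 2 htc
    _ ≤ Fintype.card H.edgeSet := hle
    _ = H.edgeFinset.card := (edgeFinset_card (G := H)).symm

/-- Remove all edges at vertex `v`. -/
def delVert {V : Type} (H : SimpleGraph V) (v : V) : SimpleGraph V where
  Adj u w := H.Adj u w ∧ u ≠ v ∧ w ≠ v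
  symm := ⟨fun u w ⟨h1, h2, h3⟩ => ⟨h1.symm, h3, h2⟩⟩
  loopless := ⟨fun u ⟨h1, _, _⟩ => H.loopless.irrefl u h1⟩

instance {V : Type} (H : SimpleGraph V) [DecidableRel H.Adj] [DecidableEq V] (v : V) :
    DecidableRel (delVert H v).Adj := fun u w => by
  unfold delVert; infer_instance

lemma delVert_edgeFinset {V : Type} [Fintype V] [DecidableEq V] (H : SimpleGraph V)
    [DecidableRel H.Adj] (v : V) :
    (delVert H v).edgeFinset = H.edgeFinset \ H.incidenceFinset v := by
  ext e
  refine Sym2.ind (fun u w => ?_) e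
  rw [mem_edgeFinset]
  simp only [mem_edgeFinset, mem_sdiff, mem_incidenceFinset, mem_edgeSet,
    mk'_mem_incidenceSet_iff, delVert, Sym2.mem_iff]
  constructor
  · rintro ⟨h1, h2, h3⟩
    exact ⟨h1, fun ⟨_, hc⟩ => by rcases hc with hc | hc <;> simp_all⟩
  · rintro ⟨h1, h2⟩
    refine ⟨h1, ?_, ?_⟩ <;> rintro rfl <;> exact h2 ⟨h1, by simp⟩

lemma delVert_card {V : Type} [Fintype V] [DecidableEq V] (H : SimpleGraph V)
    [DecidableRel H.Adj] (v : V) :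
    (delVert H v).edgeFinset.card = H.edgeFinset.card - H.degree v := by
  rw [delVert_edgeFinset, card_sdiff_of_subset, card_incidenceFinset_eq_degree]
  intro e he
  rw [mem_incidenceFinset] at he
  exact mem_edgeFinset.mpr he.1

lemma structural {V : Type} [Fintype V] [DecidableEq V] (H : SimpleGraph V) [DecidableRel H.Adj]
    (m : ℕ) (hm : 2 ≤ m) (hcol : ¬ H.Colorable (m-1)) (he : H.edgeFinset.card = m.choose 2) :
    ∃ S : Finset V, S.card = m ∧ ∀ u w, H.Adj u w ↔ u ∈ S ∧ w ∈ S ∧ u ≠ w := by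
  classical
  -- Step 1: degree dichotomy
  have hdeg : ∀ v, H.degree v = 0 ∨ m - 1 ≤ H.degree v := by
    intro v
    by_contra hcon
    push_neg at hcon
    obtain ⟨h1, h2⟩ := hcon
    have hd1 : 1 ≤ H.degree v := Nat.one_le_iff_ne_zero.mpr h1
    -- the deleted graph is (m-1)-colorable
    have hsmall : (delVert H v).edgeFinset.card < m.choose 2 := by
      rw [delVert_card, he]
      have : 0 < m.choose 2 := Nat.choose_pos hm
      omega
    have hcol' : (delVert H v).Colorable (m-1) := by
      by_contra hno
      have := lemA (delVert H v) (m-1) hno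
      rw [show m - 1 + 1 = m by omega] at this
      omega
    obtain ⟨φ⟩ := hcol'
    -- find an unused color among neighbors of v
    set T : Finset (Fin (m-1)) := (H.neighborFinset v).image φ with hT
    have hTcard : T.card < m - 1 := by
      calc T.card ≤ (H.neighborFinset v).card := card_image_le
        _ = H.degree v := H.card_neighborFinset_eq_degree v
        _ < m - 1 := h2
    have : ∃ c0 : Fin (m-1), c0 ∉ T := by
      by_contra hall
      push_neg at hall
      have : (univ : Finset (Fin (m-1))) ⊆ T := fun x _ => hall x
      have := card_le_card this
      simp only [card_univ, Fintype.card_fin] at this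
      omega
    obtain ⟨c0, hc0⟩ := this
    set ψ : V → Fin (m-1) := Function.update (⇑φ) v c0 with hψ
    have hψvalid : ∀ ⦃u w⦄, H.Adj u w → ψ u ≠ ψ w := by
      intro u w huw
      by_cases hu : u = v <;> by_cases hw : w = v
      · rw [hu, hw] at huw; exact absurd huw (H.loopless.irrefl v)
      · rw [hu] at huw ⊢
        simp only [hψ, Function.update_self, Function.update_of_ne hw]
        intro hcon
        exact hc0 (hcon ▸ mem_image_of_mem φ ((H.mem_neighborFinset v w).mpr huw))
      · rw [hw] at huw ⊢
        simp only [hψ, Function.update_self, Function.update_of_ne hu]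
        intro hcon
        exact hc0 (hcon.symm ▸ mem_image_of_mem φ ((H.mem_neighborFinset v u).mpr huw.symm))
      · simp only [hψ, Function.update_of_ne hu, Function.update_of_ne hw]
        exact φ.valid ⟨huw, hu, hw⟩
    exact hcol ⟨Coloring.mk ψ (fun {u w} h => hψvalid h)⟩
  -- S : vertices of positive degree
  set S : Finset V := univ.filter (fun v => 0 < H.degree v) with hS
  have hsum : ∑ v ∈ S, H.degree v = m * (m-1) := by
    have h1 : ∑ v ∈ univ, H.degree v = 2 * H.edgeFinset.card := H.sum_degrees_eq_twice_card_edges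
    have h2 : ∑ v ∈ S, H.degree v = ∑ v ∈ univ, H.degree v := by
      refine sum_subset (subset_univ S) ?_
      intro x _ hx
      simp only [hS, mem_filter, mem_univ, true_and, not_lt, Nat.le_zero] at hx
      exact hx
    rw [h2, h1, he]
    rcases m with _ | m'
    · omega
    · rw [Nat.choose_two_right]
      have hdvd : 2 ∣ (m' + 1) * (m' + 1 - 1) := by
        simp only [Nat.add_sub_cancel]
        rcases Nat.even_mul_succ_self m' with ⟨r, hr⟩
        exact ⟨r, by rw [Nat.mul_comm, hr]; omega⟩
      rw [Nat.mul_div_cancel' hdvd]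
  -- Step: S.card ≤ m
  have hScard_le : S.card ≤ m := by
    have hlb : S.card * (m-1) ≤ ∑ v ∈ S, H.degree v := by
      calc S.card * (m-1) = ∑ _v ∈ S, (m-1) := by rw [sum_const, smul_eq_mul]
        _ ≤ ∑ v ∈ S, H.degree v := by
            refine sum_le_sum ?_
            intro v hv
            rcases hdeg v with h0 | h
            · simp only [hS, mem_filter, mem_univ, true_and] at hv; omega
            · exact h
    rw [hsum] at hlb
    exact Nat.le_of_mul_le_mul_right hlb (by omega)
  -- Step: m ≤ S.card
  have hmS : m ≤ S.card := by
    by_contra hlt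
    push_neg at hlt
    have hle : S.card ≤ m - 1 := by omega
    set ψ : V → Fin (m-1) := fun v =>
      if h : v ∈ S then Fin.castLE hle (S.equivFin ⟨v, h⟩) else ⟨0, by omega⟩ with hψ
    refine hcol ⟨Coloring.mk ψ ?_⟩
    intro u w huw hval
    have hu : u ∈ S := by
      simp only [hS, mem_filter, mem_univ, true_and]
      exact (H.degree_pos_iff_exists_adj u).mpr ⟨w, huw⟩
    have hw : w ∈ S := by
      simp only [hS, mem_filter, mem_univ, true_and]
      exact (H.degree_pos_iff_exists_adj w).mpr ⟨u, huw.symm⟩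
    simp only [hψ, dif_pos hu, dif_pos hw] at hval
    have h1 : S.equivFin ⟨u, hu⟩ = S.equivFin ⟨w, hw⟩ :=
      Fin.castLE_injective hle hval
    have h2 : (⟨u, hu⟩ : {x // x ∈ S}) = ⟨w, hw⟩ := S.equivFin.injective h1
    exact huw.ne (congrArg Subtype.val h2)
  have hScard : S.card = m := le_antisymm hScard_le hmS
  -- Step: all degrees in S are exactly m-1
  have hdegS : ∀ v ∈ S, H.degree v = m - 1 := by
    by_contra hcon
    push_neg at hcon
    obtain ⟨v₀, hv₀, hne⟩ := hcon
    have hpos : 0 < H.degree v₀ := by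
      simp only [hS, mem_filter, mem_univ, true_and] at hv₀; exact hv₀
    have hge : m - 1 ≤ H.degree v₀ := by rcases hdeg v₀ with h | h; omega; exact h
    have hlt : ∑ _v ∈ S, (m-1) < ∑ v ∈ S, H.degree v := by
      refine sum_lt_sum ?_ ⟨v₀, hv₀, by omega⟩
      intro v hv
      rcases hdeg v with h | h
      · simp only [hS, mem_filter, mem_univ, true_and] at hv; omega
      · exact h
    rw [hsum, sum_const, smul_eq_mul, hScard] at hlt
    omega
  -- Step: neighborhoods
  have hnbr : ∀ v ∈ S, H.neighborFinset v = S.erase v := by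
    intro v hv
    apply eq_of_subset_of_card_le
    · intro u hu
      rw [mem_neighborFinset] at hu
      refine mem_erase.mpr ⟨hu.ne', ?_⟩
      simp only [hS, mem_filter, mem_univ, true_and]
      exact (H.degree_pos_iff_exists_adj u).mpr ⟨v, hu.symm⟩
    · rw [card_erase_of_mem hv, hScard, H.card_neighborFinset_eq_degree, hdegS v hv]
  refine ⟨S, hScard, fun u w => ?_⟩
  constructor
  · intro h
    refine ⟨?_, ?_, h.ne⟩
    · simp only [hS, mem_filter, mem_univ, true_and]
      exact (H.degree_pos_iff_exists_adj u).mpr ⟨w, h⟩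
    · simp only [hS, mem_filter, mem_univ, true_and]
      exact (H.degree_pos_iff_exists_adj w).mpr ⟨u, h.symm⟩
  · rintro ⟨hu, hw, hne⟩
    have : w ∈ H.neighborFinset u := by
      rw [hnbr u hu]
      exact mem_erase.mpr ⟨hne.symm, hw⟩
    exact (H.mem_neighborFinset u w).mp this

lemma gn_lower (n s t : ℕ) (hs : 2 ≤ s) (hn : 0 < n) (G : SimpleGraph (Fin n))
    (h : Gᶜ.Colorable t) : ((n - t : ℕ) : ℝ) ≤ guessingNumber G s := by
  classical
  haveI : NeZero s := ⟨by omega⟩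
  obtain ⟨φ⟩ := h
  have hφ : ∀ u w : Fin n, u ≠ w → φ u = φ w → G.Adj u w := by
    intro u w hne heq
    by_contra hna
    exact φ.valid ((G.compl_adj u w).mpr ⟨hne, hna⟩) heq
  -- class of v and representative
  set Cls : Fin n → Finset (Fin n) := fun v => univ.filter (fun u => φ u = φ v) with hCls
  have hmemCls : ∀ v, v ∈ Cls v := fun v => by simp [hCls]
  set rep : Fin t → Fin n := fun i =>
    if hne : (univ.filter (fun u => φ u = i)).Nonempty
    then (univ.filter (fun u => φ u = i)).min' hne else ⟨0, hn⟩ with hrep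
  have hrepmem : ∀ v : Fin n, rep (φ v) ∈ Cls v := by
    intro v
    have hne : (univ.filter (fun u => φ u = φ v)).Nonempty := ⟨v, by simp⟩
    simp only [hrep, dif_pos hne]
    exact min'_mem _ hne
  have hrepCls : ∀ v u : Fin n, u ∈ Cls v → rep (φ u) = rep (φ v) := by
    intro v u hu
    simp only [hCls, mem_filter] at hu
    rw [hu.2]
  -- the strategy
  set f : Fin n → (Fin n → Fin s) → Fin s := fun v c => - ∑ u ∈ (Cls v).erase v, c u with hf
  have hstrat : IsGuessingStrategy G s f := by
    intro v c₁ c₂ hagree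
    simp only [hf]
    congr 1
    refine sum_congr rfl ?_
    intro u hu
    rw [mem_erase, hCls, mem_filter] at hu
    exact hagree u ((hφ u v hu.1 hu.2.2).symm)
  -- lifting
  have hliftpf : ∀ (v : Fin n), v = rep (φ v) → ∀ u ∈ (Cls v).erase v, u ≠ rep (φ u) := by
    intro v hv u hu
    rw [mem_erase] at hu
    rw [hrepCls v u hu.2, ← hv]
    exact hu.1
  set lift : ({v : Fin n // v ≠ rep (φ v)} → Fin s) → (Fin n → Fin s) := fun d v =>
    if h : v = rep (φ v)
    then - ∑ u ∈ ((Cls v).erase v).attach, d ⟨u.1, hliftpf v h u.1 u.2⟩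
    else d ⟨v, h⟩ with hlift
  -- sums over classes vanish
  have hsum0 : ∀ (d : {v : Fin n // v ≠ rep (φ v)} → Fin s) (v : Fin n), v = rep (φ v) → ∑ u ∈ Cls v, lift d u = 0 := by
    intro d v hv
    rw [← Finset.add_sum_erase _ _ (hmemCls v)]
    have h1 : lift d v = - ∑ u ∈ ((Cls v).erase v).attach, d ⟨u.1, hliftpf v hv u.1 u.2⟩ := by
      simp only [hlift, dif_pos hv]
    have h2 : ∑ u ∈ (Cls v).erase v, lift d u
        = ∑ u ∈ ((Cls v).erase v).attach, d ⟨u.1, hliftpf v hv u.1 u.2⟩ := by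
      rw [← Finset.sum_attach ((Cls v).erase v) (fun u => lift d u)]
      refine sum_congr rfl ?_
      intro x _
      simp only [hlift, dif_neg (hliftpf v hv x.1 x.2)]
    rw [h1, h2, neg_add_cancel]
  -- lifted colorings are fixed points
  have hfix : ∀ d : {v : Fin n // v ≠ rep (φ v)} → Fin s, ∀ v, f v (lift d) = lift d v := by
    intro d v
    have hveq : Cls (rep (φ v)) = Cls v := by
      have := hrepmem v
      simp only [hCls, mem_filter] at this ⊢
      ext u
      simp only [mem_filter, mem_univ, true_and, this.2]
    have hrr : rep (φ v) = rep (φ (rep (φ v))) := (hrepCls v (rep (φ v)) (hrepmem v)).symm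
    have h0 : ∑ u ∈ Cls v, lift d u = 0 := by
      rw [← hveq]
      exact hsum0 d (rep (φ v)) hrr
    have : lift d v + ∑ u ∈ (Cls v).erase v, lift d u = 0 := by
      rw [Finset.add_sum_erase _ _ (hmemCls v)]
      exact h0
    simp only [hf]
    have := neg_eq_of_add_eq_zero_right this
    rw [← this, neg_neg]
  -- injectivity
  have hinj : Function.Injective (fun d : {v : Fin n // v ≠ rep (φ v)} → Fin s =>
      (⟨lift d, hfix d⟩ : {c : Fin n → Fin s // ∀ v, f v c = c v})) := by
    intro d₁ d₂ heq
    funext ⟨v, hv⟩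
    have : lift d₁ v = lift d₂ v := congrFun (congrArg Subtype.val heq) v
    simpa only [hlift, dif_neg hv] using this
  -- cardinalities
  have hcardW : n - t ≤ Fintype.card {v : Fin n // v ≠ rep (φ v)} := by
    have h1 : Fintype.card {v : Fin n // v ≠ rep (φ v)}
        = n - Fintype.card {v : Fin n // v = rep (φ v)} := by
      have := Fintype.card_subtype_compl (fun v : Fin n => v = rep (φ v))
      simpa [Fintype.card_fin] using this
    have h2 : Fintype.card {v : Fin n // v = rep (φ v)} ≤ t := by
      have : Function.Injective (fun v : {v : Fin n // v = rep (φ v)} => φ v.1) := by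
        rintro ⟨v₁, h₁⟩ ⟨v₂, h₂⟩ hval
        simp only at hval
        apply Subtype.ext
        simp only
        rw [h₁, h₂, hval]
      simpa [Fintype.card_fin] using Fintype.card_le_of_injective _ this
    omega
  have hcard : s ^ (n - t) ≤ Nat.card {c : Fin n → Fin s // ∀ v, f v c = c v} := by
    calc s ^ (n - t) ≤ s ^ (Fintype.card {v : Fin n // v ≠ rep (φ v)}) := Nat.pow_le_pow_right (by omega) hcardW
      _ = Nat.card ({v : Fin n // v ≠ rep (φ v)} → Fin s) := by
          rw [Nat.card_eq_fintype_card, Fintype.card_fun, Fintype.card_fin]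
      _ ≤ Nat.card {c : Fin n → Fin s // ∀ v, f v c = c v} :=
          Nat.card_le_card_of_injective _ hinj
  -- bounding the sSup
  set Sset : Set ℕ := {N : ℕ | ∃ g : Fin n → (Fin n → Fin s) → Fin s, IsGuessingStrategy G s g ∧
      N = Nat.card {c : Fin n → Fin s // ∀ v, g v c = c v}} with hSset
  have hbdd : BddAbove Sset := by
    refine ⟨s ^ n, ?_⟩
    rintro N ⟨g, _, rfl⟩
    calc Nat.card {c : Fin n → Fin s // ∀ v, g v c = c v} ≤ Nat.card (Fin n → Fin s) :=
          Finite.card_subtype_le _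
      _ = s ^ n := by rw [Nat.card_eq_fintype_card, Fintype.card_fun]; simp
  have hmem : Nat.card {c : Fin n → Fin s // ∀ v, f v c = c v} ∈ Sset := ⟨f, hstrat, rfl⟩
  have hmfp : s ^ (n - t) ≤ maxFixedPoints G s := by
    have hsup : maxFixedPoints G s = sSup Sset := rfl
    rw [hsup]
    exact le_trans hcard (le_csSup hbdd hmem)
  -- conclude via logb
  have hs1 : (1:ℝ) < (s:ℝ) := by
    have h1s : 1 < s := lt_of_lt_of_le Nat.one_lt_two hs
    exact_mod_cast h1s
  have hpos : (0:ℝ) < (s:ℝ) ^ (n - t) := by positivity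
  have hle2 : ((s:ℝ) ^ (n - t)) ≤ (maxFixedPoints G s : ℝ) := by
    have := hmfp
    exact_mod_cast this
  have heq : ((n - t : ℕ) : ℝ) = Real.logb s ((s:ℝ) ^ (n - t)) := by
    rw [Real.logb_pow, Real.logb_self_eq_one hs1, mul_one]
  rw [guessingNumber, heq]
  exact Real.logb_le_logb_of_le hs1 hpos hle2

end AuxLemmas

open Finset in
/-- For `s ≥ 2`, `a > 0`, `k = ⌈a⌉ - 1` and `n > ⌈a⌉`, any graph on `n` vertices
with guessing number `< a` and exactly `C(n,2) - C(n-k,2)` edges is isomorphic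
to `K_k ⊕ E_{n-k}`. -/
theorem extremal_graph_unique (s : ℕ) (hs : 2 ≤ s) (a : ℝ) (ha : 0 < a) (k n : ℕ)
    (hk : (k : ℤ) = ⌈a⌉ - 1) (hn : ⌈a⌉ < (n : ℤ)) (G : SimpleGraph (Fin n))
    (hG : guessingNumber G s < a)
    (hE : Nat.card G.edgeSet = n.choose 2 - (n - k).choose 2) :
    Nonempty (G ≃g cliqueJoinEmpty n k) := by

  classical
  have hnk : k + 2 ≤ n := by
    have h1 : (k : ℤ) + 1 < (n : ℤ) := by omega
    exact_mod_cast h1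
  have hak : a ≤ (k : ℝ) + 1 := by
    have h1 : a ≤ (⌈a⌉ : ℝ) := Int.le_ceil a
    have h2 : ((⌈a⌉ : ℤ) : ℝ) = (k : ℝ) + 1 := by
      have : (⌈a⌉ : ℤ) = (k : ℤ) + 1 := by omega
      rw [this]; push_cast; ring
    linarith
  set m := n - k with hmdef
  have hm2 : 2 ≤ m := by omega
  -- the complement is not (m-1)-colorable
  have hcol : ¬ Gᶜ.Colorable (m - 1) := by
    intro hc
    have hlow := gn_lower n s (m-1) hs (by omega) G hc
    have heq : n - (m - 1) = k + 1 := by omega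
    rw [heq] at hlow
    have hcast : ((k + 1 : ℕ) : ℝ) = (k : ℝ) + 1 := by push_cast; ring
    rw [hcast] at hlow
    linarith
  -- edge counts
  have hGcard : G.edgeFinset.card = n.choose 2 - m.choose 2 := by
    have h1 : G.edgeFinset.card = Nat.card G.edgeSet := by
      rw [edgeFinset_card (G := G), Nat.card_eq_fintype_card]
    rw [h1, hE]
  have hsum : G.edgeFinset.card + Gᶜ.edgeFinset.card = n.choose 2 := by
    have hd : Disjoint G.edgeFinset Gᶜ.edgeFinset :=
      disjoint_edgeFinset.mpr disjoint_compl_right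
    have hu : G.edgeFinset ∪ Gᶜ.edgeFinset = (⊤ : SimpleGraph (Fin n)).edgeFinset := by
      rw [← edgeFinset_sup]
      simp [edgeFinset]
    calc G.edgeFinset.card + Gᶜ.edgeFinset.card = (G.edgeFinset ∪ Gᶜ.edgeFinset).card :=
          (card_union_of_disjoint hd).symm
      _ = (⊤ : SimpleGraph (Fin n)).edgeFinset.card := by rw [hu]
      _ = n.choose 2 := by
          rw [card_edgeFinset_top_eq_card_choose_two, Fintype.card_fin]
  have hCcard : Gᶜ.edgeFinset.card = m.choose 2 := by
    have hle : m.choose 2 ≤ n.choose 2 := Nat.choose_le_choose 2 (by omega)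
    omega
  -- structure of the complement
  obtain ⟨S, hScard, hSadj⟩ := structural Gᶜ m hm2 hcol hCcard
  have hGadj : ∀ u w, G.Adj u w ↔ u ≠ w ∧ (u ∉ S ∨ w ∉ S) := by
    intro u w
    constructor
    · intro h
      refine ⟨h.ne, ?_⟩
      by_contra hcon
      push_neg at hcon
      have hc : Gᶜ.Adj u w := (hSadj u w).mpr ⟨hcon.1, hcon.2, h.ne⟩
      exact ((G.compl_adj u w).mp hc).2 h
    · rintro ⟨hne, hor⟩
      by_contra hna
      have hc : Gᶜ.Adj u w := (G.compl_adj u w).mpr ⟨hne, hna⟩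
      have := (hSadj u w).mp hc
      tauto
  -- build the isomorphism
  have hkn : k + (n - k) = n := by omega
  have hcS : Fintype.card {v : Fin n // v ∈ S} = n - k := by
    rw [Fintype.card_coe]; exact hScard
  have hcT : Fintype.card {v : Fin n // v ∉ S} = k := by
    have := Fintype.card_subtype_compl (fun v : Fin n => v ∈ S)
    rw [this, hcS, Fintype.card_fin]
    omega
  let eS : {v : Fin n // v ∈ S} ≃ Fin (n - k) := Fintype.equivFinOfCardEq hcS
  let eT : {v : Fin n // v ∉ S} ≃ Fin k := Fintype.equivFinOfCardEq hcT
  let π : Fin n ≃ Fin n :=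
    (((Equiv.sumCompl (fun v : Fin n => v ∈ S)).symm.trans
      (Equiv.sumComm _ _)).trans (Equiv.sumCongr eT eS)).trans
      (finSumFinEquiv.trans (finCongr hkn))
  have hπ : ∀ v : Fin n, ((π v : ℕ) < k ↔ v ∉ S) := by
    intro v
    by_cases hv : v ∈ S
    · simp only [π, Equiv.trans_apply, Equiv.sumCompl_symm_apply_of_pos hv,
        Equiv.sumComm_apply, Sum.swap_inl, Equiv.sumCongr_apply, Sum.map_inr,
        finSumFinEquiv_apply_right, finCongr_apply_coe, Fin.coe_cast, Fin.natAdd]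
      simp only [hv, not_true_eq_false, iff_false, not_lt]
      omega
    · simp only [π, Equiv.trans_apply, Equiv.sumCompl_symm_apply_of_neg hv,
        Equiv.sumComm_apply, Sum.swap_inr, Equiv.sumCongr_apply, Sum.map_inl,
        finSumFinEquiv_apply_left, finCongr_apply_coe, Fin.coe_cast, Fin.castAdd]
      simp only [hv, not_false_eq_true, iff_true]
      exact (eT ⟨v, hv⟩).isLt
  refine ⟨{ toEquiv := π, map_rel_iff' := ?_ }⟩
  intro u w
  rw [cliqueJoinEmpty, fromRel_adj, hGadj u w, hπ u, hπ w, ne_eq,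
    EmbeddingLike.apply_eq_iff_eq, ← ne_eq]
end

section
/- Let s ≥ 2 be an integer, let a be a real number with a > 0, and let n be an integer with n > ⌈a⌉. Then ex(n, gn_s ≥ a) = ex(n, gn_s ≥ ⌈a⌉); that is, the maximum number of edges over all n-vertex graphs G with gn(G,s) < a equals the maximum number of edges over all n-vertex graphs G with gn(G,s) < ⌈a⌉. -/
open SimpleGraph

open Finset in
private lemma card_filter_val_lt (n k : ℕ) (h : k ≤ n) :
    ((univ : Finset (Fin n)).filter (fun v : Fin n => (v : ℕ) < k)).card = k := by
  rw [← Fintype.card_subtype, Fintype.card_eq_nat_card]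
  have e : {v : Fin n // (v : ℕ) < k} ≃ Fin k :=
    { toFun := fun x => ⟨x.1, x.2⟩
      invFun := fun x => ⟨⟨x.1, lt_of_lt_of_le x.2 h⟩, x.2⟩
      left_inv := fun x => rfl
      right_inv := fun x => rfl }
  rw [Nat.card_congr e]; simp


open Finset in
private lemma maxFP_bddAbove {n : ℕ} (G : SimpleGraph (Fin n)) (s : ℕ) :
    BddAbove {m : ℕ | ∃ f : Fin n → (Fin n → Fin s) → Fin s, IsGuessingStrategy G s f ∧
      m = Nat.card {c : Fin n → Fin s // ∀ v, f v c = c v}} := by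
  refine ⟨Nat.card (Fin n → Fin s), ?_⟩
  rintro m ⟨f, -, rfl⟩
  exact Nat.card_le_card_of_injective Subtype.val Subtype.val_injective


open Finset in
private lemma exists_clique_coloring {n : ℕ} (G : SimpleGraph (Fin n)) [DecidableRel G.Adj]
    (k : ℕ) (A : Finset (Fin n))
    (hdeg : ∀ v ∈ A, k ≤ (A ∩ G.neighborFinset v).card) :
    ∃ col : Fin n → ℕ, (∀ v ∈ A, col v < A.card - k) ∧
      (∀ u ∈ A, ∀ v ∈ A, u ≠ v → col u = col v → G.Adj u v) := by
  suffices h : ∀ B : Finset (Fin n), B ⊆ A → ∃ col : Fin n → ℕ,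
      (∀ v ∈ B, col v < A.card - k) ∧
      (∀ u ∈ B, ∀ v ∈ B, u ≠ v → col u = col v → G.Adj u v) from h A subset_rfl
  intro B
  induction B using Finset.induction_on with
  | empty => exact fun _ => ⟨fun _ => 0, by simp, by simp⟩
  | @insert a B ha ih =>
    intro hsub
    have hBA : B ⊆ A := (subset_insert a B).trans hsub
    have haA : a ∈ A := hsub (mem_insert_self a B)
    obtain ⟨col, h1, h2⟩ := ih hBA
    have hdega : k ≤ (A ∩ G.neighborFinset a).card := hdeg a haA
    have hNsub : A ∩ G.neighborFinset a ⊆ A.erase a := by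
      intro u hu
      rw [mem_inter] at hu
      rw [mem_erase]
      exact ⟨fun h => (G.notMem_neighborFinset_self a) (h ▸ hu.2), hu.1⟩
    have hcardA : k + 1 ≤ A.card := by
      have h6 := card_le_card hNsub
      have h5 : 1 ≤ A.card := card_pos.mpr ⟨a, haA⟩
      rw [card_erase_of_mem haA] at h6
      omega
    set forb := (B.filter (fun u => ¬ G.Adj a u)).image col with hforb
    have hsub2 : B.filter (fun u => ¬ G.Adj a u) ⊆ (A.erase a) \ G.neighborFinset a := by
      intro u hu
      rw [mem_filter] at hu
      rw [mem_sdiff, mem_erase]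
      refine ⟨⟨fun h => ha (h ▸ hu.1), hBA hu.1⟩, fun h => hu.2 ((G.mem_neighborFinset a u).mp h)⟩
    have hcard : forb.card ≤ A.card - 1 - k := by
      calc forb.card ≤ (B.filter (fun u => ¬ G.Adj a u)).card := card_image_le
        _ ≤ ((A.erase a) \ G.neighborFinset a).card := card_le_card hsub2
        _ ≤ A.card - 1 - k := by
            have h3 := card_inter_add_card_sdiff (A.erase a) (G.neighborFinset a)
            have h4 : (A.erase a) ∩ G.neighborFinset a = A ∩ G.neighborFinset a := by
              rw [erase_inter]
              exact erase_eq_of_notMem (fun h => (G.notMem_neighborFinset_self a) (mem_inter.mp h).2)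
            rw [h4, card_erase_of_mem haA] at h3
            omega
    have hex : ∃ c₀ ∈ Finset.range (A.card - k), c₀ ∉ forb := by
      by_contra hcon
      push_neg at hcon
      have := card_le_card hcon
      rw [card_range] at this
      omega
    obtain ⟨c₀, hc₀r, hc₀⟩ := hex
    refine ⟨Function.update col a c₀, ?_, ?_⟩
    · intro v hv
      rcases mem_insert.mp hv with rfl | hvB
      · rw [Function.update_self]; exact mem_range.mp hc₀r
      · rw [Function.update_of_ne (fun (h : _ = a) => ha (h ▸ hvB))]; exact h1 v hvB
    · intro u hu v hv huv hcc
      rcases mem_insert.mp hu with hua | huB <;> rcases mem_insert.mp hv with hva | hvB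
      · exact absurd (hua.trans hva.symm) huv
      · rw [hua] at hcc ⊢
        rw [Function.update_self, Function.update_of_ne (fun (h : _ = a) => ha (h ▸ hvB))] at hcc
        by_contra hadj
        exact hc₀ (hcc ▸ mem_image_of_mem col (mem_filter.mpr ⟨hvB, hadj⟩))
      · rw [hva] at hcc ⊢
        rw [Function.update_self, Function.update_of_ne (fun (h : _ = a) => ha (h ▸ huB))] at hcc
        by_contra hadj
        exact hc₀ (hcc.symm ▸ mem_image_of_mem col (mem_filter.mpr ⟨huB, fun h => hadj h.symm⟩))
      · rw [Function.update_of_ne (fun (h : _ = a) => ha (h ▸ huB)),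
          Function.update_of_ne (fun (h : _ = a) => ha (h ▸ hvB))] at hcc
        exact h2 u huB v hvB huv hcc

open Finset in
private lemma pow_le_maxFixedPoints {n : ℕ} (G : SimpleGraph (Fin n)) [DecidableRel G.Adj]
    (s k : ℕ) (hs : 2 ≤ s) (A : Finset (Fin n)) (hA : A.Nonempty)
    (hdeg : ∀ v ∈ A, k ≤ (A ∩ G.neighborFinset v).card)
    (col : Fin n → ℕ) (hcol1 : ∀ v ∈ A, col v < A.card - k)
    (hcol2 : ∀ u ∈ A, ∀ v ∈ A, u ≠ v → col u = col v → G.Adj u v) :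
    s ^ k ≤ maxFixedPoints G s := by
  haveI : NeZero s := ⟨by omega⟩
  classical
  obtain ⟨v₀, hv₀⟩ := hA
  have hNsub : ∀ v ∈ A, A ∩ G.neighborFinset v ⊆ A.erase v := by
    intro v hv u hu
    rw [mem_inter] at hu
    rw [mem_erase]
    exact ⟨fun h => (G.notMem_neighborFinset_self v) (h ▸ hu.2), hu.1⟩
  have hcardA : k + 1 ≤ A.card := by
    have h6 := card_le_card (hNsub v₀ hv₀)
    have h5 : 1 ≤ A.card := card_pos.mpr ⟨v₀, hv₀⟩
    rw [card_erase_of_mem hv₀] at h6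
    have := hdeg v₀ hv₀
    omega
  set fib : Fin n → Finset (Fin n) := fun v => A.filter (fun u => col u = col v) with hfib
  have hvfib : ∀ v ∈ A, v ∈ fib v := fun v hv => mem_filter.mpr ⟨hv, rfl⟩
  have hfibsub : ∀ v, fib v ⊆ A := fun v => filter_subset _ _
  have hfibeq : ∀ u ∈ A, col u = col v₀ → True := fun _ _ _ => trivial
  have hfibcongr : ∀ u v : Fin n, col u = col v → fib u = fib v := by
    intro u v huv
    simp only [hfib, huv]
  set rep : Fin n → Fin n := fun v =>
    if h : v ∈ A then (fib v).min' ⟨v, mem_filter.mpr ⟨h, rfl⟩⟩ else v with hrep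
  have hrepfib : ∀ v ∈ A, rep v ∈ fib v := by
    intro v hv
    simp only [hrep, dif_pos hv]
    exact min'_mem _ _
  have hrepA : ∀ v ∈ A, rep v ∈ A := fun v hv => hfibsub v (hrepfib v hv)
  have hrepcol : ∀ v ∈ A, col (rep v) = col v := fun v hv => (mem_filter.mp (hrepfib v hv)).2
  have hrepeq : ∀ u ∈ A, ∀ v ∈ A, col u = col v → rep u = rep v := by
    intro u hu v hv huv
    have hf : fib u = fib v := hfibcongr u v huv
    simp only [hrep, dif_pos hu, dif_pos hv]
    congr 1
  have hreprep : ∀ v ∈ A, rep (rep v) = rep v :=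
    fun v hv => hrepeq (rep v) (hrepA v hv) v hv (hrepcol v hv)
  set F : Finset (Fin n) := A.filter (fun v => ¬ rep v = v) with hF
  set R : Finset (Fin n) := A.filter (fun v => rep v = v) with hR
  have hRcard : R.card ≤ A.card - k := by
    have hinj : Set.InjOn col R := by
      intro r1 h1 r2 h2 hcc
      rw [hR, coe_filter] at h1 h2
      obtain ⟨h1A, h1r⟩ := h1
      obtain ⟨h2A, h2r⟩ := h2
      calc r1 = rep r1 := h1r.symm
        _ = rep r2 := hrepeq r1 h1A r2 h2A hcc
        _ = r2 := h2r
    have h1 : (R.image col).card = R.card := card_image_of_injOn hinj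
    have h2 : R.image col ⊆ Finset.range (A.card - k) := by
      intro c hc
      obtain ⟨r, hr, rfl⟩ := mem_image.mp hc
      exact mem_range.mpr (hcol1 r (mem_filter.mp hr).1)
    calc R.card = (R.image col).card := h1.symm
      _ ≤ A.card - k := by have := card_le_card h2; rwa [card_range] at this
  have hFcard : k ≤ F.card := by
    have := card_filter_add_card_filter_not (s := A) (p := fun v => rep v = v)
    rw [← hR] at this
    have hFR : (A.filter fun v => ¬ rep v = v) = F := rfl
    rw [hFR] at this
    omega
  have hFsubA : F ⊆ A := filter_subset _ _
  -- the strategy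
  set f : Fin n → (Fin n → Fin s) → Fin s := fun v c =>
    if v ∈ A then (- ∑ u ∈ (fib v).erase v, c u) else 0 with hfdef
  have hclique : ∀ v ∈ A, ∀ u ∈ (fib v).erase v, G.Adj v u := by
    intro v hv u hu
    rw [mem_erase] at hu
    obtain ⟨hune, hufib⟩ := hu
    obtain ⟨huA, hucol⟩ := mem_filter.mp hufib
    exact hcol2 v hv u huA (fun h => hune (h.symm)) hucol.symm
  have hstrat : IsGuessingStrategy G s f := by
    intro v c₁ c₂ hagree
    simp only [hfdef]
    by_cases hv : v ∈ A
    · rw [if_pos hv, if_pos hv]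
      congr 1
      exact Finset.sum_congr rfl (fun u hu => hagree u (hclique v hv u hu))
    · rw [if_neg hv, if_neg hv]
  -- the fixed points
  set ext : ({v : Fin n // v ∈ F} → Fin s) → Fin n → Fin s := fun g u =>
    if h : u ∈ F then g ⟨u, h⟩ else 0 with hext
  set cg : ({v : Fin n // v ∈ F} → Fin s) → Fin n → Fin s := fun g v =>
    if v ∈ F then ext g v else
      if v ∈ A then (- ∑ u ∈ (fib v).erase v, ext g u) else 0 with hcg
  have hmemF : ∀ v ∈ A, ∀ u ∈ (fib v).erase (rep v), u ∈ F := by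
    intro v hv u hu
    rw [mem_erase] at hu
    obtain ⟨hune, hufib⟩ := hu
    obtain ⟨huA, hucol⟩ := mem_filter.mp hufib
    rw [hF, mem_filter]
    exact ⟨huA, fun h => hune (h ▸ hrepeq u huA v hv hucol)⟩
  have hextF : ∀ g : {v : Fin n // v ∈ F} → Fin s, ∀ u (h : u ∈ F), ext g u = g ⟨u, h⟩ := by
    intro g u h
    simp only [hext, dif_pos h]
  have hcgF : ∀ g, ∀ u ∈ F, cg g u = ext g u := by
    intro g u hu
    simp only [hcg, if_pos hu]
  have keysum : ∀ g, ∀ v ∈ A, ∑ u ∈ fib v, cg g u = 0 := by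
    intro g v hv
    set r : Fin n := rep v with hrdef
    have hrfib : r ∈ fib v := hrepfib v hv
    have hrA : r ∈ A := hrepA v hv
    have hrnotF : r ∉ F := by
      rw [hF, mem_filter]
      push_neg
      intro _
      exact hreprep v hv
    have hfibr : fib r = fib v := hfibcongr r v (hrepcol v hv)
    have hcgr : cg g r = - ∑ u ∈ (fib v).erase r, ext g u := by
      simp only [hcg, if_neg hrnotF, if_pos hrA]
      rw [show (fib r).erase r = (fib v).erase r by rw [hfibr]]
    have hcgu : ∀ u ∈ (fib v).erase r, cg g u = ext g u := by
      intro u hu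
      exact hcgF g u (hmemF v hv u hu)
    have hsplit := Finset.add_sum_erase (fib v) (cg g) hrfib
    rw [← hsplit, hcgr, Finset.sum_congr rfl hcgu]
    exact neg_add_cancel _
  have hfix : ∀ g, ∀ v, f v (cg g) = cg g v := by
    intro g v
    by_cases hv : v ∈ A
    · have hvfibv : v ∈ fib v := hvfib v hv
      have hsplit := Finset.add_sum_erase (fib v) (cg g) hvfibv
      have hzero : cg g v + ∑ x ∈ (fib v).erase v, cg g x = 0 :=
        hsplit.trans (keysum g v hv)
      have hS : ∑ x ∈ (fib v).erase v, cg g x = - cg g v :=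
        (neg_eq_of_add_eq_zero_right hzero).symm
      show (if v ∈ A then - ∑ u ∈ (fib v).erase v, cg g u else 0) = cg g v
      rw [if_pos hv, hS, neg_neg]
    · have hvF : v ∉ F := fun h => hv (hFsubA h)
      show (if v ∈ A then - ∑ u ∈ (fib v).erase v, cg g u else 0)
        = (if v ∈ F then ext g v else if v ∈ A then - ∑ u ∈ (fib v).erase v, ext g u else 0)
      rw [if_neg hv, if_neg hvF, if_neg hv]
  have hinj : Function.Injective (fun g : {v : Fin n // v ∈ F} → Fin s =>
      (⟨cg g, hfix g⟩ : {c : Fin n → Fin s // ∀ v, f v c = c v})) := by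
    intro g₁ g₂ hgg
    funext x
    have h1 : cg g₁ x.1 = cg g₂ x.1 := congrFun (congrArg Subtype.val hgg) x.1
    rw [hcgF g₁ x.1 x.2, hcgF g₂ x.1 x.2, hextF g₁ x.1 x.2, hextF g₂ x.1 x.2] at h1
    exact h1
  have hcard : s ^ k ≤ Nat.card {c : Fin n → Fin s // ∀ v, f v c = c v} := by
    have h1 := Nat.card_le_card_of_injective _ hinj
    have h2 : Nat.card ({v : Fin n // v ∈ F} → Fin s) = s ^ F.card := by
      rw [Nat.card_fun]
      simp [Nat.card_eq_fintype_card]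
    rw [h2] at h1
    have hspos : 0 < s := Nat.lt_of_lt_of_le Nat.zero_lt_two hs
    have h3 : s ^ k ≤ s ^ F.card := Nat.pow_le_pow_right hspos hFcard
    exact le_trans h3 h1
  have hmem : Nat.card {c : Fin n → Fin s // ∀ v, f v c = c v} ∈
      {m : ℕ | ∃ f' : Fin n → (Fin n → Fin s) → Fin s, IsGuessingStrategy G s f' ∧
        m = Nat.card {c : Fin n → Fin s // ∀ v, f' v c = c v}} := ⟨f, hstrat, rfl⟩
  have hle := le_csSup (maxFP_bddAbove G s) hmem
  unfold maxFixedPoints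
  exact le_trans hcard hle

open Finset in
private lemma sum_degree_bound {n : ℕ} (G : SimpleGraph (Fin n)) [DecidableRel G.Adj] (k : ℕ)
    (H : ∀ B : Finset (Fin n), B.Nonempty → ∃ v ∈ B, (B ∩ G.neighborFinset v).card < k) :
    ∀ m (A : Finset (Fin n)), A.card = m → k ≤ A.card →
      (∑ v ∈ A, (A ∩ G.neighborFinset v).card) + k * (k - 1) ≤ 2 * (k - 1) * A.card := by
  intro m
  induction m using Nat.strong_induction_on with
  | _ m ih =>
    intro A hAm hkA
    have hNsub : ∀ v ∈ A, A ∩ G.neighborFinset v ⊆ A.erase v := by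
      intro v hv u hu
      rw [mem_inter] at hu
      rw [mem_erase]
      exact ⟨fun h => (G.notMem_neighborFinset_self v) (h ▸ hu.2), hu.1⟩
    rcases eq_or_lt_of_le hkA with heq | hlt
    · have hb : ∀ v ∈ A, (A ∩ G.neighborFinset v).card ≤ k - 1 := by
        intro v hv
        have h1 := card_le_card (hNsub v hv)
        rw [card_erase_of_mem hv] at h1
        omega
      have h2 : (∑ v ∈ A, (A ∩ G.neighborFinset v).card) ≤ ∑ _v ∈ A, (k - 1) :=
        Finset.sum_le_sum hb
      rw [Finset.sum_const, smul_eq_mul, ← heq] at h2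
      have h3 : k * (k - 1) + k * (k - 1) = 2 * (k - 1) * k := by ring
      rw [← heq]
      linarith
    · have hA : A.Nonempty := card_pos.mp (by omega)
      obtain ⟨v, hv, hd⟩ := H A hA
      have hvN : v ∉ G.neighborFinset v := G.notMem_neighborFinset_self v
      have hAint : (A.erase v) ∩ G.neighborFinset v = A ∩ G.neighborFinset v := by
        rw [erase_inter]
        exact erase_eq_of_notMem (fun h => hvN (mem_inter.mp h).2)
      have hce : (A.erase v).card = A.card - 1 := card_erase_of_mem hv
      have ih' := ih (m - 1) (by omega) (A.erase v) (by omega) (by omega)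
      rw [hce] at ih'
      -- split the sum
      have hsplit1 : (∑ u ∈ A, (A ∩ G.neighborFinset u).card)
          = (A ∩ G.neighborFinset v).card + ∑ u ∈ A.erase v, (A ∩ G.neighborFinset u).card :=
        (Finset.add_sum_erase A _ hv).symm
      have hpt : ∀ u ∈ A.erase v, (A ∩ G.neighborFinset u).card
          = ((A.erase v) ∩ G.neighborFinset u).card + (if v ∈ G.neighborFinset u then 1 else 0) := by
        intro u hu
        have he : (A.erase v) ∩ G.neighborFinset u = (A ∩ G.neighborFinset u).erase v :=
          erase_inter v A (G.neighborFinset u)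
        by_cases hvu : v ∈ G.neighborFinset u
        · have hvm : v ∈ A ∩ G.neighborFinset u := mem_inter.mpr ⟨hv, hvu⟩
          rw [he, card_erase_of_mem hvm, if_pos hvu]
          have : 1 ≤ (A ∩ G.neighborFinset u).card := card_pos.mpr ⟨v, hvm⟩
          omega
        · rw [he, erase_eq_of_notMem (fun h => hvu (mem_inter.mp h).2), if_neg hvu]
          omega
      have hsplit2 : ∑ u ∈ A.erase v, (A ∩ G.neighborFinset u).card
          = (∑ u ∈ A.erase v, ((A.erase v) ∩ G.neighborFinset u).card)
            + ((A.erase v).filter (fun u => v ∈ G.neighborFinset u)).card := by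
        rw [Finset.sum_congr rfl hpt, Finset.sum_add_distrib]
        congr 1
        exact (Finset.card_filter _ _).symm
      have hfilt : (A.erase v).filter (fun u => v ∈ G.neighborFinset u)
          = A ∩ G.neighborFinset v := by
        ext u
        simp only [mem_filter, mem_erase, mem_inter, SimpleGraph.mem_neighborFinset]
        constructor
        · rintro ⟨⟨hne, huA⟩, hadj⟩
          exact ⟨huA, hadj.symm⟩
        · rintro ⟨huA, hadj⟩
          exact ⟨⟨fun h => (h ▸ hadj).ne rfl, huA⟩, hadj.symm⟩
      have har : 1 ≤ A.card := by omega
      have e1 : 2 * (k - 1) * A.card = 2 * (k - 1) * (A.card - 1) + 2 * (k - 1) := by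
        obtain ⟨t, ht⟩ : ∃ t, A.card = t + 1 := ⟨A.card - 1, by omega⟩
        rw [ht]
        simp [Nat.add_sub_cancel]
        ring
      have hd2 : 2 * (A ∩ G.neighborFinset v).card ≤ 2 * (k - 1) := by omega
      rw [hsplit1, hsplit2, hfilt]
      linarith

open Finset in
private lemma two_mul_card_edge_cliqueJoinEmpty (n k' : ℕ) (hk' : k' ≤ n) :
    2 * Nat.card (cliqueJoinEmpty n k').edgeSet = k' * (n - 1) + (n - k') * k' := by
  classical
  rw [Nat.card_eq_fintype_card, ← SimpleGraph.edgeFinset_card,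
    ← SimpleGraph.sum_degrees_eq_twice_card_edges]
  have hdeg : ∀ v : Fin n, (cliqueJoinEmpty n k').degree v
      = if (v : ℕ) < k' then n - 1 else k' := by
    intro v
    rw [← SimpleGraph.card_neighborFinset_eq_degree]
    by_cases hv : (v : ℕ) < k'
    · rw [if_pos hv]
      have hset : (cliqueJoinEmpty n k').neighborFinset v = univ.erase v := by
        ext u
        rw [SimpleGraph.mem_neighborFinset]
        simp only [SimpleGraph.mem_neighborFinset, cliqueJoinEmpty, SimpleGraph.fromRel_adj,
          mem_erase, mem_univ, and_true]
        constructor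
        · rintro ⟨hne, -⟩; exact fun h => hne h.symm
        · intro hne; exact ⟨fun h => hne h.symm, Or.inl hv⟩
      rw [hset, card_erase_of_mem (mem_univ v), card_univ, Fintype.card_fin]
    · rw [if_neg hv]
      have hset : (cliqueJoinEmpty n k').neighborFinset v
          = univ.filter (fun u : Fin n => (u : ℕ) < k') := by
        ext u
        rw [SimpleGraph.mem_neighborFinset]
        simp only [SimpleGraph.mem_neighborFinset, cliqueJoinEmpty, SimpleGraph.fromRel_adj,
          mem_filter, mem_univ, true_and]
        constructor
        · rintro ⟨hne, h | h⟩
          · exact absurd h hv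
          · exact h
        · intro h
          refine ⟨fun he => hv ?_, Or.inr h⟩
          rw [he]; exact h
      rw [hset, card_filter_val_lt n k' hk']
  rw [Finset.sum_congr rfl (fun v _ => hdeg v), Finset.sum_ite, Finset.sum_const,
    Finset.sum_const, smul_eq_mul, smul_eq_mul, card_filter_val_lt n k' hk']
  have h2 := card_filter_add_card_filter_not (s := (univ : Finset (Fin n)))
    (p := fun v : Fin n => (v : ℕ) < k')
  rw [card_univ, Fintype.card_fin, card_filter_val_lt n k' hk'] at h2
  have h3 : (univ.filter (fun v : Fin n => ¬ (v : ℕ) < k')).card = n - k' := by omega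
  rw [h3]

private lemma maxFP_le_pow_cliqueJoinEmpty (n s k' : ℕ) (hk' : k' ≤ n) :
    maxFixedPoints (cliqueJoinEmpty n k') s ≤ s ^ k' := by
  apply csSup_le'
  rintro m ⟨f, hf, rfl⟩
  have hinj : Function.Injective
      (fun (c : {c : Fin n → Fin s // ∀ v, f v c = c v}) =>
        (fun x : {v : Fin n // (v : ℕ) < k'} => c.1 x.1)) := by
    intro c₁ c₂ hcc
    have key : ∀ v : Fin n, c₁.1 v = c₂.1 v := by
      intro v
      by_cases hv : (v : ℕ) < k'
      · exact congrFun hcc ⟨v, hv⟩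
      · rw [← c₁.2 v, ← c₂.2 v]
        apply hf
        intro u hu
        rw [cliqueJoinEmpty, SimpleGraph.fromRel_adj] at hu
        have hu' : (u : ℕ) < k' := by
          rcases hu.2 with h | h
          · exact absurd h hv
          · exact h
        exact congrFun hcc ⟨u, hu'⟩
    exact Subtype.ext (funext key)
  have h1 := Nat.card_le_card_of_injective _ hinj
  have h2 : Nat.card ({v : Fin n // (v : ℕ) < k'} → Fin s) = s ^ k' := by
    rw [Nat.card_fun]
    simp only [Nat.card_eq_fintype_card, Fintype.card_fin]
    congr 1
    rw [Fintype.card_subtype]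
    exact card_filter_val_lt n k' hk'
  rw [h2] at h1
  exact h1

private lemma gn_le_of_maxFP_le {n : ℕ} (G : SimpleGraph (Fin n)) (s b : ℕ) (hs : 2 ≤ s)
    (h : maxFixedPoints G s ≤ s ^ b) : guessingNumber G s ≤ (b : ℝ) := by
  have hs1 : (1 : ℝ) < s := by exact_mod_cast hs
  unfold guessingNumber
  rcases Nat.eq_zero_or_pos (maxFixedPoints G s) with h0 | hpos
  · rw [h0]
    simp only [Nat.cast_zero, Real.logb_zero]
    exact_mod_cast Nat.zero_le b
  · have hle : Real.logb s (maxFixedPoints G s) ≤ Real.logb s ((s : ℝ) ^ b) := by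
      apply (Real.logb_le_logb hs1 (by exact_mod_cast hpos) (by positivity)).mpr
      exact_mod_cast h
    rw [Real.logb_pow, Real.logb_self_eq_one hs1, mul_one] at hle
    exact hle

private lemma gn_ge_of_pow_le {n : ℕ} (G : SimpleGraph (Fin n)) (s b : ℕ) (hs : 2 ≤ s)
    (h : s ^ b ≤ maxFixedPoints G s) : (b : ℝ) ≤ guessingNumber G s := by
  have hs1 : (1 : ℝ) < s := by exact_mod_cast hs
  have hpos : 0 < maxFixedPoints G s := lt_of_lt_of_le (Nat.pow_pos (by omega : 0 < s)) h
  unfold guessingNumber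
  have hle : Real.logb s ((s : ℝ) ^ b) ≤ Real.logb s (maxFixedPoints G s) := by
    apply (Real.logb_le_logb hs1 (by positivity) (by exact_mod_cast hpos)).mpr
    exact_mod_cast h
  rwa [Real.logb_pow, Real.logb_self_eq_one hs1, mul_one] at hle

private lemma exGN_set_bddAbove (n s : ℕ) (a : ℝ) :
    BddAbove {m : ℕ | ∃ G : SimpleGraph (Fin n),
      guessingNumber G s < a ∧ m = Nat.card G.edgeSet} := by
  refine ⟨Nat.card (Sym2 (Fin n)), ?_⟩
  rintro m ⟨G, -, rfl⟩
  exact Nat.card_le_card_of_injective Subtype.val Subtype.val_injective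

/-- For `s ≥ 2`, `a > 0` and `n > ⌈a⌉`, the extremal number for guessing number
`a` equals the one for `⌈a⌉`: `ex(n, gn_s ≥ a) = ex(n, gn_s ≥ ⌈a⌉)`. -/
theorem exGN_eq_exGN_ceil (s : ℕ) (hs : 2 ≤ s) (a : ℝ) (ha : 0 < a) (n : ℕ)
    (hn : ⌈a⌉ < (n : ℤ)) :
    exGN n s a = exGN n s ((⌈a⌉ : ℤ) : ℝ) := by
  classical
  set k : ℕ := ⌈a⌉.toNat with hkdef
  have hcpos : (0 : ℤ) < ⌈a⌉ := Int.ceil_pos.mpr ha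
  have hkc : (k : ℤ) = ⌈a⌉ := Int.toNat_of_nonneg (le_of_lt hcpos)
  have hk1 : 1 ≤ k := by omega
  have hkcast : ((⌈a⌉ : ℤ) : ℝ) = (k : ℝ) := by rw [← hkc]; push_cast; ring
  have hkn : k < n := by
    have h1 : (k : ℤ) < (n : ℤ) := hkc ▸ hn
    exact_mod_cast h1
  have hak : a ≤ (k : ℝ) := by rw [← hkcast]; exact_mod_cast Int.le_ceil a
  set k' : ℕ := k - 1 with hk'def
  have hk'a : ((k' : ℕ) : ℝ) < a := by
    have h1 : ((⌈a⌉ : ℤ) : ℝ) < a + 1 := by exact_mod_cast Int.ceil_lt_add_one a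
    have h4 : (k : ℝ) < a + 1 := hkcast ▸ h1
    have h2 : ((k' : ℕ) : ℝ) = (k : ℝ) - 1 := by
      rw [hk'def, Nat.cast_sub hk1, Nat.cast_one]
    rw [h2]
    linarith
  set Gs := cliqueJoinEmpty n k' with hGsdef
  have hGsgn : guessingNumber Gs s < a := by
    have h1 := gn_le_of_maxFP_le Gs s k' hs
      (maxFP_le_pow_cliqueJoinEmpty n s k' (by omega))
    exact lt_of_le_of_lt h1 hk'a
  rw [hkcast]
  unfold exGN
  apply le_antisymm
  · have hne : {m : ℕ | ∃ G : SimpleGraph (Fin n),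
        guessingNumber G s < a ∧ m = Nat.card G.edgeSet}.Nonempty :=
      ⟨Nat.card Gs.edgeSet, Gs, hGsgn, rfl⟩
    refine csSup_le_csSup (exGN_set_bddAbove n s (k : ℝ)) hne ?_
    rintro m ⟨G, h1, h2⟩
    exact ⟨G, lt_of_lt_of_le h1 hak, h2⟩
  · have hne2 : {m : ℕ | ∃ G : SimpleGraph (Fin n),
        guessingNumber G s < (k : ℝ) ∧ m = Nat.card G.edgeSet}.Nonempty :=
      ⟨Nat.card Gs.edgeSet, Gs, lt_of_lt_of_le hGsgn hak, rfl⟩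
    apply csSup_le hne2
    rintro m ⟨G, hG, rfl⟩
    have hbdd := exGN_set_bddAbove n s a
    have hGsmem : Nat.card Gs.edgeSet ∈ {m : ℕ | ∃ G : SimpleGraph (Fin n),
        guessingNumber G s < a ∧ m = Nat.card G.edgeSet} := ⟨Gs, hGsgn, rfl⟩
    refine le_trans ?_ (le_csSup hbdd hGsmem)
    letI : DecidableRel G.Adj := Classical.decRel _
    have H : ∀ B : Finset (Fin n), B.Nonempty →
        ∃ v ∈ B, (B ∩ G.neighborFinset v).card < k := by
      intro B hB
      by_contra hcon
      push_neg at hcon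
      obtain ⟨col, hcol1, hcol2⟩ := exists_clique_coloring G k B hcon
      have h1 := pow_le_maxFixedPoints G s k hs B hB hcon col hcol1 hcol2
      have h2 := gn_ge_of_pow_le G s k hs h1
      linarith
    have hcu : (Finset.univ : Finset (Fin n)).card = n := by
      rw [Finset.card_univ, Fintype.card_fin]
    have hsum := sum_degree_bound G k H (Finset.univ : Finset (Fin n)).card
      Finset.univ rfl (by rw [hcu]; omega)
    rw [hcu] at hsum
    have hdegsum : ∑ v ∈ (Finset.univ : Finset (Fin n)),
        ((Finset.univ : Finset (Fin n)) ∩ G.neighborFinset v).card = ∑ v, G.degree v := by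
      apply Finset.sum_congr rfl
      intro v _
      rw [Finset.univ_inter, SimpleGraph.card_neighborFinset_eq_degree]
    have h2e : ∑ v, G.degree v = 2 * G.edgeFinset.card := G.sum_degrees_eq_twice_card_edges
    have hcardedge : Nat.card G.edgeSet = G.edgeFinset.card := by
      rw [Nat.card_eq_fintype_card, SimpleGraph.edgeFinset_card]
    rw [hdegsum, h2e, ← hcardedge] at hsum
    have hGse := two_mul_card_edge_cliqueJoinEmpty n k' (by omega)
    obtain ⟨t, ht⟩ : ∃ t, n = k' + 1 + t := ⟨n - k, by omega⟩
    have e1 : 2 * (k - 1) * n = (k' * (n - 1) + (n - k') * k') + k * (k - 1) := by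
      have h3 : n - 1 = k' + t := by omega
      have h4 : n - k' = t + 1 := by omega
      have h6 : k - 1 = k' := by omega
      have h5 : k = k' + 1 := by omega
      rw [h3, h4, h6, h5, ht]; ring
    have h7 : 2 * Nat.card G.edgeSet ≤ 2 * Nat.card Gs.edgeSet := by
      rw [hGsdef] at *
      linarith
    omega
end

section
/- For every integer n ≥ 2 and every integer s ≥ 2, the saturation number satisfies sat(n, gn_s ≥ 2) = n − 1. Moreover, every (gn_s ≥ 2)-saturated graph on n vertices with exactly n−1 edges is isomorphic to the star K_{1,n−1}. -/
open SimpleGraph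

section SatGNAux

variable {n s : ℕ}

def StarAt {n : ℕ} (G : SimpleGraph (Fin n)) (x : Fin n) : Prop :=
  ∀ u v : Fin n, G.Adj u v → u = x ∨ v = x

variable {n s : ℕ}

lemma maxFP_le_of_starAt (G : SimpleGraph (Fin n)) {x : Fin n}
    (hx : StarAt G x) : maxFixedPoints G s ≤ s := by
  apply csSup_le'
  rintro m ⟨f, hf, rfl⟩
  have hinj : Function.Injective
      (fun c : {c : Fin n → Fin s // ∀ v, f v c = c v} => c.1 x) := by
    rintro ⟨c₁, h₁⟩ ⟨c₂, h₂⟩ (h : c₁ x = c₂ x)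
    refine Subtype.ext (funext fun v => ?_)
    by_cases hv : v = x
    · subst hv; exact h
    · have : f v c₁ = f v c₂ := by
        apply hf
        intro u hu
        rcases hx v u hu with h' | h'
        · exact absurd h' hv
        · subst h'; exact h
      show c₁ v = c₂ v
      rw [← h₁ v, ← h₂ v, this]
  calc Nat.card {c : Fin n → Fin s // ∀ v, f v c = c v}
      ≤ Nat.card (Fin s) := Nat.card_le_card_of_injective _ hinj
    _ = s := by simp

lemma gn_lt_two_of_starAt (hs : 2 ≤ s) (G : SimpleGraph (Fin n)) {x : Fin n}
    (hx : StarAt G x) : guessingNumber G s < 2 := by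
  have hle : maxFixedPoints G s ≤ s := maxFP_le_of_starAt G hx
  have hb : (1:ℝ) < s := by exact_mod_cast hs.trans_lt' one_lt_two
  unfold guessingNumber
  rcases Nat.eq_zero_or_pos (maxFixedPoints G s) with h0 | hpos
  · rw [h0]; norm_num
  · rw [Real.logb_lt_iff_lt_rpow hb (by exact_mod_cast hpos)]
    have h1 : (maxFixedPoints G s : ℝ) ≤ s := by exact_mod_cast hle
    have h2 : (s:ℝ) ^ (2:ℝ) = (s:ℝ) ^ (2:ℕ) := by
      rw [show (2:ℝ) = ((2:ℕ):ℝ) by norm_num, Real.rpow_natCast]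
    rw [h2]
    nlinarith

lemma two_le_gn_of_strategy (hs : 2 ≤ s) (G : SimpleGraph (Fin n))
    (f : Fin n → (Fin n → Fin s) → Fin s) (hf : IsGuessingStrategy G s f)
    (hcard : Nat.card {c : Fin n → Fin s // ∀ v, f v c = c v} = s ^ 2) :
    2 ≤ guessingNumber G s := by
  have hb : (1:ℝ) < s := by exact_mod_cast hs.trans_lt' one_lt_two
  have hbdd : BddAbove {m : ℕ | ∃ f : Fin n → (Fin n → Fin s) → Fin s,
      IsGuessingStrategy G s f ∧ m = Nat.card {c : Fin n → Fin s // ∀ v, f v c = c v}} := by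
    refine ⟨Nat.card (Fin n → Fin s), ?_⟩
    rintro m ⟨g, hg, rfl⟩
    exact Nat.card_le_card_of_injective _ Subtype.val_injective
  have hle : s ^ 2 ≤ maxFixedPoints G s := le_csSup hbdd ⟨f, hf, hcard.symm⟩
  have hpos : (0:ℝ) < (maxFixedPoints G s : ℝ) := by
    have : 0 < s ^ 2 := by positivity
    exact_mod_cast this.trans_le hle
  unfold guessingNumber
  rw [Real.le_logb_iff_rpow_le hb hpos]
  have h2 : (s:ℝ) ^ (2:ℝ) = (s:ℝ) ^ (2:ℕ) := by
    rw [show (2:ℝ) = ((2:ℕ):ℝ) by norm_num, Real.rpow_natCast]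
  rw [h2]
  exact_mod_cast hle

lemma two_le_gn_pair (hs : 2 ≤ s) (G : SimpleGraph (Fin n))
    {a b u w : Fin n} (hab : G.Adj a b) (huw : G.Adj u w)
    (hau : a ≠ u) (haw : a ≠ w) (hbu : b ≠ u) (hbw : b ≠ w) :
    2 ≤ guessingNumber G s := by
  haveI : NeZero s := ⟨by omega⟩
  have hab' : a ≠ b := hab.ne
  have huw' : u ≠ w := huw.ne
  have hba : b ≠ a := hab'.symm
  have hua : u ≠ a := hau.symm
  have hub : u ≠ b := hbu.symm
  have hwa : w ≠ a := haw.symm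
  have hwb : w ≠ b := hbw.symm
  have hwu : w ≠ u := huw'.symm
  set f : Fin n → (Fin n → Fin s) → Fin s := fun v c =>
    if v = a then c b else if v = b then c a else if v = u then c w
    else if v = w then c u else 0 with hfdef
  apply two_le_gn_of_strategy hs G f
  · intro v c₁ c₂ h
    by_cases h1 : v = a
    · simp [hfdef, h1, hba, hua, hub, hwa, hwb, hwu]
      exact h b (by rw [h1]; exact hab)
    by_cases h2 : v = b
    · simp [hfdef, h2, hba, hua, hub, hwa, hwb, hwu]
      exact h a (by rw [h2]; exact hab.symm)
    by_cases h3 : v = u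
    · simp [hfdef, h3, hba, hua, hub, hwa, hwb, hwu]
      exact h w (by rw [h3]; exact huw)
    by_cases h4 : v = w
    · simp [hfdef, h4, hba, hua, hub, hwa, hwb, hwu]
      exact h u (by rw [h4]; exact huw.symm)
    · simp [hfdef, h1, h2, h3, h4]
  · have e : {c : Fin n → Fin s // ∀ v, f v c = c v} ≃ (Fin s × Fin s) := by
      refine
        { toFun := fun c => (c.1 a, c.1 u)
          invFun := fun p => ⟨fun v => if v = a ∨ v = b then p.1
            else if v = u ∨ v = w then p.2 else 0, ?_⟩
          left_inv := ?_
          right_inv := ?_ }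
      · intro v
        by_cases h1 : v = a
        · simp [hfdef, h1, hba, hua, hub, hwa, hwb, hwu]
        · by_cases h2 : v = b
          · simp [hfdef, h2, hba, hua, hub, hwa, hwb, hwu]
          · by_cases h3 : v = u
            · simp [hfdef, h3, hba, hua, hub, hwa, hwb, hwu]
            · by_cases h4 : v = w
              · simp [hfdef, h4, hba, hua, hub, hwa, hwb, hwu]
              · simp [hfdef, h1, h2, h3, h4]
      · rintro ⟨c, hc⟩
        refine Subtype.ext (funext fun v => ?_)
        by_cases h1 : v = a
        · simp [h1]
        · by_cases h2 : v = b
          · have hcb := hc b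
            simp [hfdef, hba, hua, hub, hwa, hwb, hwu] at hcb
            simp [h2, hcb]
          · by_cases h3 : v = u
            · simp [h3, hua, hub]
            · by_cases h4 : v = w
              · have hcw := hc w
                simp [hfdef, hba, hua, hub, hwa, hwb, hwu] at hcw
                simp [h4, hwa, hwb, hcw]
              · have hcv := hc v
                simp [hfdef, h1, h2, h3, h4] at hcv
                simp [h1, h2, h3, h4, ← hcv]
      · rintro ⟨p, q⟩
        simp [hua, hub]
    rw [Nat.card_congr e]
    simp [Nat.card_eq_fintype_card, sq]

lemma two_le_gn_triangle (hs : 2 ≤ s) (G : SimpleGraph (Fin n))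
    {a b t : Fin n} (hab : G.Adj a b) (hat : G.Adj a t) (hbt : G.Adj b t) :
    2 ≤ guessingNumber G s := by
  haveI : NeZero s := ⟨by omega⟩
  have hab' : a ≠ b := hab.ne
  have hba : b ≠ a := hab'.symm
  have hta : t ≠ a := hat.ne'
  have htb : t ≠ b := hbt.ne'
  set f : Fin n → (Fin n → Fin s) → Fin s := fun v c =>
    if v = a then -(c b + c t) else if v = b then -(c a + c t)
    else if v = t then -(c a + c b) else 0 with hfdef
  apply two_le_gn_of_strategy hs G f
  · intro v c₁ c₂ h
    by_cases h1 : v = a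
    · simp only [hfdef, h1]
      simp only [if_true]
      rw [h b (by rw [h1]; exact hab), h t (by rw [h1]; exact hat)]
    by_cases h2 : v = b
    · simp only [hfdef, h2]
      simp only [if_true]
      rw [h a (by rw [h2]; exact hab.symm), h t (by rw [h2]; exact hbt)]
      simp [hba, hta, htb]
    by_cases h3 : v = t
    · simp only [hfdef, h3]
      simp only [if_true]
      rw [h a (by rw [h3]; exact hat.symm), h b (by rw [h3]; exact hbt.symm)]
      simp [hba, hta, htb]
    · simp only [hfdef]
      rw [if_neg h1, if_neg h1, if_neg h2, if_neg h2, if_neg h3, if_neg h3]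
  · have e : {c : Fin n → Fin s // ∀ v, f v c = c v} ≃ (Fin s × Fin s) := by
      refine
        { toFun := fun c => (c.1 b, c.1 t)
          invFun := fun p => ⟨fun v => if v = a then -(p.1 + p.2)
            else if v = b then p.1 else if v = t then p.2 else 0, ?_⟩
          left_inv := ?_
          right_inv := ?_ }
      · intro v
        by_cases h1 : v = a
        · simp [hfdef, h1, hba, hta, htb]
        · by_cases h2 : v = b
          · simp [hfdef, h2, hba, hta, htb]
            try ring
          · by_cases h3 : v = t
            · simp [hfdef, h3, hba, hta, htb]
              try ring
            · simp [hfdef, h1, h2, h3]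
      · rintro ⟨c, hc⟩
        refine Subtype.ext (funext fun v => ?_)
        by_cases h1 : v = a
        · have hca := hc a
          simp [hfdef, hba, hta, htb] at hca
          simp [h1, hba, hta, hca]
        · by_cases h2 : v = b
          · simp [h2, hba]
          · by_cases h3 : v = t
            · simp [h3, hta, htb]
            · have hcv := hc v
              simp [hfdef, h1, h2, h3] at hcv
              simp [h1, h2, h3, ← hcv]
      · rintro ⟨p, q⟩
        simp [hba, hta, htb]
    rw [Nat.card_congr e]
    simp [Nat.card_eq_fintype_card, sq]

lemma starAt_or_gn_ge (hs : 2 ≤ s) (hn : 1 ≤ n) (G : SimpleGraph (Fin n)) :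
    (∃ x, StarAt G x) ∨ 2 ≤ guessingNumber G s := by
  by_cases hE : ∃ p q : Fin n, G.Adj p q
  · obtain ⟨a, b, hab⟩ := hE
    by_cases hA : StarAt G a
    · exact Or.inl ⟨a, hA⟩
    by_cases hB : StarAt G b
    · exact Or.inl ⟨b, hB⟩
    right
    simp only [StarAt, not_forall] at hA hB
    obtain ⟨u, v, huv, hnuv⟩ := hA
    obtain ⟨p, q, hpq, hnpq⟩ := hB
    push_neg at hnuv hnpq
    obtain ⟨hua, hva⟩ := hnuv
    obtain ⟨hpb, hqb⟩ := hnpq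
    by_cases hub : u = b
    all_goals by_cases hvb : v = b
    · exact absurd (hub.trans hvb.symm) huv.ne
    · -- u = b : edge b v with v not in {a, b}
      have hbv : G.Adj b v := hub ▸ huv
      have hvb' : v ≠ b := fun h => huv.ne (hub.trans h.symm)
      by_cases hpa : p = a
      · have haq : G.Adj a q := hpa ▸ hpq
        by_cases hqv : q = v
        · exact two_le_gn_triangle hs G hab (hqv ▸ haq) hbv
        · exact two_le_gn_pair hs G haq hbv hab.ne (Ne.symm hva) hqb hqv
      · by_cases hqa : q = a
        · have hap : G.Adj a p := (hqa ▸ hpq).symm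
          by_cases hpv : p = v
          · exact two_le_gn_triangle hs G hab (hpv ▸ hap) hbv
          · exact two_le_gn_pair hs G hap hbv hab.ne (Ne.symm hva) hpb hpv
        · exact two_le_gn_pair hs G hab hpq (Ne.symm hpa) (Ne.symm hqa)
            (Ne.symm hpb) (Ne.symm hqb)
    · -- v = b : edge b u with u not in {a, b}
      have hbu : G.Adj b u := (hvb ▸ huv).symm
      have hub' : u ≠ b := hub
      by_cases hpa : p = a
      · have haq : G.Adj a q := hpa ▸ hpq
        by_cases hqu : q = u
        · exact two_le_gn_triangle hs G hab (hqu ▸ haq) hbu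
        · exact two_le_gn_pair hs G haq hbu hab.ne (Ne.symm hua) hqb hqu
      · by_cases hqa : q = a
        · have hap : G.Adj a p := (hqa ▸ hpq).symm
          by_cases hpu : p = u
          · exact two_le_gn_triangle hs G hab (hpu ▸ hap) hbu
          · exact two_le_gn_pair hs G hap hbu hab.ne (Ne.symm hua) hpb hpu
        · exact two_le_gn_pair hs G hab hpq (Ne.symm hpa) (Ne.symm hqa)
            (Ne.symm hpb) (Ne.symm hqb)
    · exact two_le_gn_pair hs G hab huv (Ne.symm hua) (Ne.symm hva)
        (Ne.symm hub) (Ne.symm hvb)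
  · push_neg at hE
    exact Or.inl ⟨⟨0, by omega⟩, fun u v h => absurd h (hE u v)⟩

lemma gn_lt_two_iff (hn : 1 ≤ n) (hs : 2 ≤ s) (G : SimpleGraph (Fin n)) :
    guessingNumber G s < 2 ↔ ∃ x, StarAt G x := by
  constructor
  · intro h
    rcases starAt_or_gn_ge hs hn G with h' | h'
    · exact h'
    · linarith
  · rintro ⟨x, hx⟩
    exact gn_lt_two_of_starAt hs G hx

lemma saturated_iff (hn : 2 ≤ n) (hs : 2 ≤ s) (G : SimpleGraph (Fin n)) :
    GNSaturated G s 2 ↔ ∃ x, StarAt G x ∧ ∀ y, y ≠ x → G.Adj x y := by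
  constructor
  · rintro ⟨h1, h2⟩
    obtain ⟨x, hx⟩ := (gn_lt_two_iff (by omega) hs G).mp h1
    refine ⟨x, hx, fun y hy => ?_⟩
    by_contra hadj
    have hstar' : StarAt (G ⊔ SimpleGraph.fromEdgeSet {s(x, y)}) x := by
      intro u v huv
      rw [SimpleGraph.sup_adj, SimpleGraph.fromEdgeSet_adj] at huv
      rcases huv with huv | ⟨hm, -⟩
      · exact hx u v huv
      · rw [Set.mem_singleton_iff, Sym2.eq_iff] at hm
        rcases hm with ⟨h', -⟩ | ⟨-, h'⟩
        · exact Or.inl h'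
        · exact Or.inr h'
    have := h2 x y (Ne.symm hy) hadj
    have := gn_lt_two_of_starAt hs _ hstar'
    linarith
  · rintro ⟨x, hx, hfull⟩
    refine ⟨gn_lt_two_of_starAt hs G hx, fun u w hne hnadj => ?_⟩
    have hux : u ≠ x := by
      rintro rfl
      exact hnadj (hfull w (Ne.symm hne))
    have hwx : w ≠ x := by
      rintro rfl
      exact hnadj (hfull u hne).symm
    set G' := G ⊔ SimpleGraph.fromEdgeSet {s(u, w)} with hG'
    have hxu : G'.Adj x u := Or.inl (hfull u hux)
    have hxw : G'.Adj x w := Or.inl (hfull w hwx)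
    have huw : G'.Adj u w := by
      rw [hG', SimpleGraph.sup_adj, SimpleGraph.fromEdgeSet_adj]
      exact Or.inr ⟨rfl, hne⟩
    exact two_le_gn_triangle hs G' hxu hxw huw

lemma card_edgeSet_fullStar (G : SimpleGraph (Fin n)) {x : Fin n}
    (hx : StarAt G x) (hfull : ∀ y, y ≠ x → G.Adj x y) :
    Nat.card G.edgeSet = n - 1 := by
  have e : {y : Fin n // y ≠ x} ≃ G.edgeSet := by
    refine Equiv.ofBijective
      (fun y => ⟨s(x, y.1), G.mem_edgeSet.mpr (hfull y.1 y.2)⟩) ⟨?_, ?_⟩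
    · rintro ⟨y₁, h₁⟩ ⟨y₂, h₂⟩ h
      simp only [Subtype.mk.injEq, Sym2.eq_iff] at h
      rcases h with ⟨-, h⟩ | ⟨h', -⟩
      · exact Subtype.ext h
      · exact absurd h'.symm h₂
    · rintro ⟨e, he⟩
      induction e using Sym2.ind with
      | _ p q =>
        rw [SimpleGraph.mem_edgeSet] at he
        rcases hx p q he with rfl | rfl
        · exact ⟨⟨q, he.ne'⟩, rfl⟩
        · exact ⟨⟨p, he.ne⟩, Subtype.ext (Sym2.eq_swap)⟩
  rw [← Nat.card_congr e, Nat.card_eq_fintype_card]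
  have : Fintype.card {y : Fin n // y ≠ x} = n - 1 := by
    simp [Fintype.card_subtype_compl]
  exact this

lemma cliqueJoinEmpty_starAt (hn : 2 ≤ n) :
    StarAt (cliqueJoinEmpty n 1) (⟨0, by omega⟩ : Fin n) ∧
    ∀ y, y ≠ (⟨0, by omega⟩ : Fin n) → (cliqueJoinEmpty n 1).Adj ⟨0, by omega⟩ y := by
  constructor
  · intro u v huv
    rw [cliqueJoinEmpty, SimpleGraph.fromRel_adj] at huv
    obtain ⟨-, h | h⟩ := huv
    · left; exact Fin.ext (by simp; omega)
    · right; exact Fin.ext (by simp; omega)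
  · intro y hy
    rw [cliqueJoinEmpty, SimpleGraph.fromRel_adj]
    exact ⟨fun h => hy h.symm, Or.inl (by simp)⟩

lemma fullStar_iso (hn : 2 ≤ n) (G : SimpleGraph (Fin n)) {x : Fin n}
    (hx : StarAt G x) (hfull : ∀ y, y ≠ x → G.Adj x y) :
    Nonempty (G ≃g cliqueJoinEmpty n 1) := by
  set z0 : Fin n := ⟨0, by omega⟩ with hz0
  have hGadj : ∀ u v, G.Adj u v ↔ u ≠ v ∧ (u = x ∨ v = x) := by
    intro u v
    constructor
    · intro h
      exact ⟨h.ne, hx u v h⟩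
    · rintro ⟨hne, rfl | rfl⟩
      · exact hfull v hne.symm
      · exact (hfull u hne).symm
  have key : ∀ wv : Fin n, ((Equiv.swap x z0 wv : Fin n) : ℕ) < 1 ↔ wv = x := by
    intro wv
    constructor
    · intro h
      have h0 : Equiv.swap x z0 wv = z0 := Fin.ext (by have hz : (z0 : ℕ) = 0 := rfl; omega)
      have := (Equiv.swap x z0).injective (h0.trans (Equiv.swap_apply_left x z0).symm)
      exact this
    · rintro rfl
      rw [Equiv.swap_apply_left]
      show (0:ℕ) < 1
      omega
  refine ⟨⟨Equiv.swap x z0, ?_⟩⟩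
  intro u v
  show (cliqueJoinEmpty n 1).Adj (Equiv.swap x z0 u) (Equiv.swap x z0 v) ↔ G.Adj u v
  rw [cliqueJoinEmpty, SimpleGraph.fromRel_adj, hGadj u v, key u, key v,
    (Equiv.swap x z0).injective.ne_iff]


end SatGNAux

/-- For `n ≥ 2` and `s ≥ 2`, `sat(n, gn_s ≥ 2) = n - 1`, and every
`(gn_s ≥ 2)`-saturated graph on `n` vertices with `n - 1` edges is isomorphic to
the star `K_{1,n-1}` (which is `K_1 ⊕ E_{n-1}`). -/
theorem satGN_two (n s : ℕ) (hn : 2 ≤ n) (hs : 2 ≤ s) :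
    satGN n s 2 = n - 1 ∧
    ∀ G : SimpleGraph (Fin n), GNSaturated G s 2 → Nat.card G.edgeSet = n - 1 →
      Nonempty (G ≃g cliqueJoinEmpty n 1) := by
  obtain ⟨hcstar, hcfull⟩ := cliqueJoinEmpty_starAt (n := n) hn
  have hcsat : GNSaturated (cliqueJoinEmpty n 1) s 2 :=
    (saturated_iff hn hs _).mpr ⟨_, hcstar, hcfull⟩
  have hccard : Nat.card (cliqueJoinEmpty n 1).edgeSet = n - 1 :=
    card_edgeSet_fullStar _ hcstar hcfull
  have hchar : ∀ G : SimpleGraph (Fin n), GNSaturated G s 2 →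
      Nat.card G.edgeSet = n - 1 ∧ Nonempty (G ≃g cliqueJoinEmpty n 1) := by
    intro G hG
    obtain ⟨x, hx, hfull⟩ := (saturated_iff hn hs G).mp hG
    exact ⟨card_edgeSet_fullStar G hx hfull, fullStar_iso hn G hx hfull⟩
  have hmem : n - 1 ∈ {m : ℕ | ∃ G : SimpleGraph (Fin n),
      GNSaturated G s 2 ∧ m = Nat.card G.edgeSet} :=
    ⟨cliqueJoinEmpty n 1, hcsat, hccard.symm⟩
  constructor
  · apply le_antisymm
    · exact Nat.sInf_le hmem
    · apply le_csInf ⟨_, hmem⟩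
      rintro m ⟨G, hG, rfl⟩
      exact (hchar G hG).1.ge
  · intro G hG _
    exact (hchar G hG).2
end

section
/- For every integer n ≥ 3 and every integer s ≥ 2, a graph G on n vertices is (gn_s ≥ n−1)-saturated if and only if G is isomorphic to the complete graph K_n with one edge removed. Consequently, sat(n, gn_s ≥ n−1) = C(n,2) − 1. -/
open SimpleGraph

lemma card_fixed_le_pow {n s : ℕ} (f : Fin n → (Fin n → Fin s) → Fin s) :
    Nat.card {c : Fin n → Fin s // ∀ v, f v c = c v} ≤ s ^ n := by
  have h := Nat.card_le_card_of_injective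
    (Subtype.val : {c : Fin n → Fin s // ∀ v, f v c = c v} → (Fin n → Fin s))
    Subtype.val_injective
  simpa [Nat.card_fun] using h

lemma bddAbove_fp (n s : ℕ) (G : SimpleGraph (Fin n)) :
    BddAbove {m : ℕ | ∃ f : Fin n → (Fin n → Fin s) → Fin s, IsGuessingStrategy G s f ∧
      m = Nat.card {c : Fin n → Fin s // ∀ v, f v c = c v}} := by
  refine ⟨s ^ n, ?_⟩
  rintro m ⟨f, _, rfl⟩
  exact card_fixed_le_pow f

lemma card_fixed_le {n s : ℕ} {G : SimpleGraph (Fin n)} {u w : Fin n} (huw : u ≠ w)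
    (hna : ¬G.Adj u w) {f : Fin n → (Fin n → Fin s) → Fin s}
    (hf : IsGuessingStrategy G s f) :
    Nat.card {c : Fin n → Fin s // ∀ v, f v c = c v} ≤ s ^ (n - 2) := by
  have hinj : Function.Injective
      (fun (c : {c : Fin n → Fin s // ∀ v, f v c = c v})
        (x : {x : Fin n // x ≠ u ∧ x ≠ w}) => c.1 x.1) := by
    rintro ⟨c₁, hc₁⟩ ⟨c₂, hc₂⟩ h
    have hout : ∀ x : Fin n, x ≠ u → x ≠ w → c₁ x = c₂ x := fun x h1 h2 =>
      congrFun h ⟨x, h1, h2⟩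
    have hu : c₁ u = c₂ u := by
      rw [← hc₁ u, ← hc₂ u]
      exact hf u c₁ c₂ (fun x hx => hout x hx.ne' (fun he => hna (he ▸ hx)))
    have hw : c₁ w = c₂ w := by
      rw [← hc₁ w, ← hc₂ w]
      refine hf w c₁ c₂ (fun x hx => hout x (fun he => hna (he ▸ hx.symm)) hx.ne')
    apply Subtype.ext
    funext v
    by_cases h1 : v = u
    · rw [h1]; exact hu
    · by_cases h2 : v = w
      · rw [h2]; exact hw
      · exact hout v h1 h2
  have hcard : Nat.card ({x : Fin n // x ≠ u ∧ x ≠ w} → Fin s) = s ^ (n - 2) := by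
    rw [Nat.card_fun, Nat.card_eq_fintype_card, Nat.card_eq_fintype_card, Fintype.card_fin]
    congr 1
    rw [Fintype.card_subtype]
    have : (Finset.univ.filter (fun x : Fin n => x ≠ u ∧ x ≠ w)) = Finset.univ \ {u, w} := by
      ext x; simp [not_or]
    rw [this, Finset.card_sdiff_of_subset (Finset.subset_univ _), Finset.card_pair huw,
      Finset.card_univ, Fintype.card_fin]
  calc Nat.card {c : Fin n → Fin s // ∀ v, f v c = c v}
      ≤ Nat.card ({x : Fin n // x ≠ u ∧ x ≠ w} → Fin s) :=
        Nat.card_le_card_of_injective _ hinj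
    _ = s ^ (n - 2) := hcard

lemma maxFP_le {n s : ℕ} {G : SimpleGraph (Fin n)} {u w : Fin n} (huw : u ≠ w)
    (hna : ¬G.Adj u w) : maxFixedPoints G s ≤ s ^ (n - 2) := by
  refine csSup_le' ?_
  rintro m ⟨f, hf, rfl⟩
  exact card_fixed_le huw hna hf

lemma gn_lt {n s : ℕ} (hn : 3 ≤ n) (hs : 2 ≤ s) {G : SimpleGraph (Fin n)} {u w : Fin n}
    (huw : u ≠ w) (hna : ¬G.Adj u w) : guessingNumber G s < (n : ℝ) - 1 := by
  have hb : (1 : ℝ) < s := by exact_mod_cast hs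
  have hkey : Real.logb s (maxFixedPoints G s) ≤ (n : ℝ) - 2 := by
    rcases Nat.eq_zero_or_pos (maxFixedPoints G s) with h0 | hpos
    · rw [h0]
      simp only [Nat.cast_zero, Real.logb_zero]
      have : (3 : ℝ) ≤ n := by exact_mod_cast hn
      linarith
    · have h1 : (maxFixedPoints G s : ℝ) ≤ (s : ℝ) ^ (n - 2) := by
        exact_mod_cast maxFP_le huw hna
      have h2 : Real.logb s (maxFixedPoints G s) ≤ Real.logb s ((s : ℝ) ^ (n - 2)) := by
        rw [Real.logb_le_logb hb (by exact_mod_cast hpos)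
          (by positivity)]
        exact h1
      have h3 : Real.logb s ((s : ℝ) ^ (n - 2)) = ((n - 2 : ℕ) : ℝ) := by
        rw [Real.logb_pow, Real.logb_self_eq_one hb, mul_one]
      rw [h3] at h2
      have h4 : ((n - 2 : ℕ) : ℝ) = (n : ℝ) - 2 := by
        have : (2 : ℕ) ≤ n := by omega
        push_cast [Nat.cast_sub this]
        ring
      linarith [h2, h4.symm ▸ h2]
  unfold guessingNumber
  linarith

lemma card_fixed_top {m k : ℕ} :
    ∃ f : Fin (m + 1) → (Fin (m + 1) → Fin (k + 2)) → Fin (k + 2),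
      IsGuessingStrategy (⊤ : SimpleGraph (Fin (m + 1))) (k + 2) f ∧
      Nat.card {c : Fin (m + 1) → Fin (k + 2) // ∀ v, f v c = c v} = (k + 2) ^ m := by
  refine ⟨fun v c => - ∑ u ∈ Finset.univ.erase v, c u, ?_, ?_⟩
  · intro v c₁ c₂ h
    show -∑ u ∈ Finset.univ.erase v, c₁ u = -∑ u ∈ Finset.univ.erase v, c₂ u
    have : ∑ u ∈ Finset.univ.erase v, c₁ u = ∑ u ∈ Finset.univ.erase v, c₂ u := by
      refine Finset.sum_congr rfl (fun u hu => ?_)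
      have huv : u ≠ v := Finset.ne_of_mem_erase hu
      exact h u (by simp [huv.symm])
    rw [this]
  · have hchar : ∀ c : Fin (m + 1) → Fin (k + 2),
        (∀ v, (- ∑ u ∈ Finset.univ.erase v, c u) = c v) ↔ (∑ u, c u) = 0 := by
      intro c
      constructor
      · intro h
        rw [← Finset.add_sum_erase Finset.univ _ (Finset.mem_univ 0), ← h 0]
        exact neg_add_cancel _
      · intro h v
        rw [Finset.sum_erase_eq_sub (Finset.mem_univ v), h]
        rw [zero_sub, neg_neg]
    have E : {c : Fin (m + 1) → Fin (k + 2) // ∀ v, (- ∑ u ∈ Finset.univ.erase v, c u) = c v} ≃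
        (Fin m → Fin (k + 2)) := by
      refine ⟨fun c i => c.1 i.succ,
        fun g => ⟨Fin.cons (- ∑ i, g i) g, ?_⟩, ?_, ?_⟩
      · rw [hchar, Fin.sum_univ_succ]
        simp only [Fin.cons_zero, Fin.cons_succ]
        exact neg_add_cancel _
      · rintro ⟨c, hc⟩
        apply Subtype.ext
        funext v
        refine Fin.cases ?_ (fun i => ?_) v
        · simp only [Fin.cons_zero]
          have := (hchar c).1 hc
          rw [Fin.sum_univ_succ] at this
          exact neg_eq_of_add_eq_zero_left this
        · simp only [Fin.cons_succ]
      · intro g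
        funext i
        simp only [Fin.cons_succ]
    rw [Nat.card_congr E, Nat.card_fun]
    simp [Nat.card_eq_fintype_card]

lemma gn_top_ge {n s : ℕ} (hn : 1 ≤ n) (hs : 2 ≤ s) :
    (n : ℝ) - 1 ≤ guessingNumber (⊤ : SimpleGraph (Fin n)) s := by
  obtain ⟨m, rfl⟩ : ∃ m, n = m + 1 := ⟨n - 1, by omega⟩
  obtain ⟨k, rfl⟩ : ∃ k, s = k + 2 := ⟨s - 2, by omega⟩
  obtain ⟨f, hstrat, hcard⟩ := card_fixed_top (m := m) (k := k)
  have hmem : (k+2)^m ∈ {p : ℕ | ∃ f : Fin (m+1) → (Fin (m+1) → Fin (k+2)) → Fin (k+2),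
      IsGuessingStrategy (⊤ : SimpleGraph (Fin (m+1))) (k+2) f ∧
      p = Nat.card {c : Fin (m+1) → Fin (k+2) // ∀ v, f v c = c v}} := ⟨f, hstrat, hcard.symm⟩
  have hle : (k + 2) ^ m ≤ maxFixedPoints (⊤ : SimpleGraph (Fin (m+1))) (k + 2) :=
    le_csSup (bddAbove_fp (m+1) (k+2) ⊤) hmem
  have hb : (1 : ℝ) < ((k + 2 : ℕ) : ℝ) := by
    have h2k : (1 : ℕ) < k + 2 := Nat.one_lt_succ_succ k
    exact_mod_cast h2k
  have hle' : (((k+2:ℕ) : ℝ)) ^ m ≤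
      ((maxFixedPoints (⊤ : SimpleGraph (Fin (m+1))) (k + 2) : ℕ) : ℝ) := by
    exact_mod_cast hle
  have hpos : (0 : ℝ) < (((k+2:ℕ) : ℝ)) ^ m := by positivity
  have h1 := (Real.logb_le_logb hb hpos (lt_of_lt_of_le hpos hle')).2 hle'
  have h2 : Real.logb ((k+2 : ℕ) : ℝ) (((k+2 : ℕ) : ℝ) ^ m) = m := by
    rw [Real.logb_pow, Real.logb_self_eq_one hb, mul_one]
  unfold guessingNumber
  rw [h2] at h1
  push_cast at h1 ⊢
  linarith

lemma delete_sup_eq_top {n : ℕ} {u w : Fin n} (_huw : u ≠ w) :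
    ((⊤ : SimpleGraph (Fin n)).deleteEdges {s(u, w)}) ⊔
      SimpleGraph.fromEdgeSet {s(u, w)} = ⊤ := by
  ext x y
  simp only [sup_adj, deleteEdges_adj, top_adj, fromEdgeSet_adj, Set.mem_singleton_iff]
  constructor
  · rintro (⟨h, -⟩ | ⟨-, h⟩) <;> exact h
  · intro h
    by_cases he : s(x, y) = s(u, w)
    · exact Or.inr ⟨he, h⟩
    · exact Or.inl ⟨h, he⟩

lemma sat_of_deleteEdge {n s : ℕ} (hn : 3 ≤ n) (hs : 2 ≤ s) {u w : Fin n} (huw : u ≠ w) :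
    GNSaturated ((⊤ : SimpleGraph (Fin n)).deleteEdges {s(u, w)}) s ((n : ℝ) - 1) := by
  constructor
  · refine gn_lt hn hs huw ?_
    simp [deleteEdges_adj]
  · intro x y hxy hna
    rw [deleteEdges_adj] at hna
    push_neg at hna
    have hxy' : s(x, y) = s(u, w) := by
      have := hna (by simp [hxy])
      simpa using this
    rw [hxy', delete_sup_eq_top huw]
    exact gn_top_ge (by omega) hs

lemma eq_delete_of_sat {n s : ℕ} (hn : 3 ≤ n) (hs : 2 ≤ s) {G : SimpleGraph (Fin n)}
    (hG : GNSaturated G s ((n : ℝ) - 1)) :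
    ∃ u w : Fin n, u ≠ w ∧ G = (⊤ : SimpleGraph (Fin n)).deleteEdges {s(u, w)} := by
  obtain ⟨u, w, huw, hna⟩ : ∃ u w : Fin n, u ≠ w ∧ ¬G.Adj u w := by
    by_contra hall
    push_neg at hall
    have hGtop : G = ⊤ := by
      ext x y
      simp only [top_adj]
      exact ⟨fun h => h.ne, fun h => hall x y h⟩
    have := gn_top_ge (n := n) (by omega) hs
    rw [← hGtop] at this
    linarith [hG.1]
  have hclaim : ∀ x y : Fin n, x ≠ y → ¬G.Adj x y → s(x, y) = s(u, w) := by
    intro x y hxy hnxy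
    by_contra hne
    have h2 := hG.2 u w huw hna
    have hna2 : ¬(G ⊔ SimpleGraph.fromEdgeSet {s(u, w)}).Adj x y := by
      simp only [sup_adj, fromEdgeSet_adj, Set.mem_singleton_iff]
      rintro (h | ⟨h, -⟩)
      · exact hnxy h
      · exact hne h
    have := gn_lt hn hs hxy hna2
    linarith
  refine ⟨u, w, huw, ?_⟩
  ext x y
  simp only [deleteEdges_adj, top_adj, Set.mem_singleton_iff]
  constructor
  · intro h
    refine ⟨h.ne, fun he => ?_⟩
    rw [Sym2.eq_iff] at he
    rcases he with ⟨rfl, rfl⟩ | ⟨rfl, rfl⟩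
    · exact hna h
    · exact hna h.symm
  · rintro ⟨hxy, hne⟩
    by_contra hnadj
    exact hne (hclaim x y hxy hnadj)

lemma card_edge_delete {n : ℕ} {u w : Fin n} (huw : u ≠ w) :
    Nat.card ((⊤ : SimpleGraph (Fin n)).deleteEdges {s(u, w)}).edgeSet = n.choose 2 - 1 := by
  rw [edgeSet_deleteEdges, Nat.card_coe_set_eq,
    Set.ncard_diff_singleton_of_mem (by simpa using huw)]
  congr 1
  rw [Set.ncard_eq_toFinset_card']
  have : (⊤ : SimpleGraph (Fin n)).edgeSet.toFinset =
      (⊤ : SimpleGraph (Fin n)).edgeFinset := rfl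
  rw [this, card_edgeFinset_top_eq_card_choose_two, Fintype.card_fin]

/-- For `n ≥ 3` and `s ≥ 2`, a graph on `n` vertices is `(gn_s ≥ n-1)`-saturated
iff it is isomorphic to the complete graph `K_n` with one edge removed;
consequently `sat(n, gn_s ≥ n-1) = C(n,2) - 1`. -/
theorem satGN_top (n s : ℕ) (hn : 3 ≤ n) (hs : 2 ≤ s) :
    (∀ G : SimpleGraph (Fin n),
      GNSaturated G s ((n : ℝ) - 1) ↔
        ∃ e ∈ (⊤ : SimpleGraph (Fin n)).edgeSet,
          Nonempty (G ≃g (⊤ : SimpleGraph (Fin n)).deleteEdges {e})) ∧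
    satGN n s ((n : ℝ) - 1) = n.choose 2 - 1 := by
  have hiff : ∀ G : SimpleGraph (Fin n),
      GNSaturated G s ((n : ℝ) - 1) ↔
        ∃ e ∈ (⊤ : SimpleGraph (Fin n)).edgeSet,
          Nonempty (G ≃g (⊤ : SimpleGraph (Fin n)).deleteEdges {e}) := by
    intro G
    constructor
    · intro hsat
      obtain ⟨u, w, huw, hGeq⟩ := eq_delete_of_sat hn hs hsat
      refine ⟨s(u, w), by simpa using huw, ?_⟩
      rw [hGeq]
      exact ⟨Iso.refl⟩
    · rintro ⟨e, he, ⟨φ⟩⟩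
      obtain ⟨⟨a, b⟩, rfl⟩ := e.exists_rep
      have hab : a ≠ b := by simpa using he
      have huw : φ.symm a ≠ φ.symm b := fun h => hab (φ.symm.injective h)
      have hGeq : G = (⊤ : SimpleGraph (Fin n)).deleteEdges {s(φ.symm a, φ.symm b)} := by
        ext x y
        rw [← φ.map_adj_iff]
        simp only [deleteEdges_adj, top_adj, Set.mem_singleton_iff, Sym2.eq_iff]
        constructor
        · rintro ⟨hne, hor⟩
          refine ⟨fun h => hne (by rw [h]), fun hc => hor ?_⟩
          rcases hc with ⟨rfl, rfl⟩ | ⟨rfl, rfl⟩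
          · exact Or.inl ⟨φ.apply_symm_apply a, φ.apply_symm_apply b⟩
          · exact Or.inr ⟨φ.apply_symm_apply b, φ.apply_symm_apply a⟩
        · rintro ⟨hne, hor⟩
          refine ⟨fun h => hne (φ.injective h), fun hc => hor ?_⟩
          rcases hc with ⟨h1', h2'⟩ | ⟨h1', h2'⟩
          · exact Or.inl ⟨(φ.symm_apply_apply x).symm.trans (congrArg (fun z => φ.symm z) h1'),
              (φ.symm_apply_apply y).symm.trans (congrArg (fun z => φ.symm z) h2')⟩
          · exact Or.inr ⟨(φ.symm_apply_apply x).symm.trans (congrArg (fun z => φ.symm z) h1'),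
              (φ.symm_apply_apply y).symm.trans (congrArg (fun z => φ.symm z) h2')⟩
      rw [hGeq]
      exact sat_of_deleteEdge hn hs huw
  refine ⟨hiff, ?_⟩
  have h01 : (⟨0, by omega⟩ : Fin n) ≠ ⟨1, by omega⟩ := by
    simp [Fin.mk.injEq]
  have hset : {m : ℕ | ∃ G : SimpleGraph (Fin n),
      GNSaturated G s ((n : ℝ) - 1) ∧ m = Nat.card G.edgeSet} = {n.choose 2 - 1} := by
    ext m
    simp only [Set.mem_setOf_eq, Set.mem_singleton_iff]
    constructor
    · rintro ⟨G, hsat, rfl⟩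
      obtain ⟨u, w, huw, rfl⟩ := eq_delete_of_sat hn hs hsat
      exact card_edge_delete huw
    · rintro rfl
      exact ⟨_, sat_of_deleteEdge hn hs h01, (card_edge_delete h01).symm⟩
  unfold satGN
  rw [hset, csInf_singleton]
end

section
/- For every integer s ≥ 2 and every graph G on n ≥ 1 vertices, gn(G,s) = n − 1 if and only if G is the complete graph K_n. -/
open SimpleGraph

section Aux

open Finset

variable {n s : ℕ}

/-- If every vertex outside `p` has all its neighbors inside `p`, then a fixed point is
determined by its restriction to `p`. -/
lemma card_fixed_le_aux {G : SimpleGraph (Fin n)}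
    {f : Fin n → (Fin n → Fin s) → Fin s} (hf : IsGuessingStrategy G s f)
    (p : Fin n → Prop) [DecidablePred p]
    (hp : ∀ v, ¬ p v → ∀ u, G.Adj v u → p u) :
    Nat.card {c : Fin n → Fin s // ∀ v, f v c = c v} ≤ s ^ (Fintype.card {x // p x}) := by
  have hinj : Function.Injective
      (fun (c : {c : Fin n → Fin s // ∀ v, f v c = c v}) => (fun x : {x // p x} => c.1 x.1)) := by
    rintro ⟨c₁, h₁⟩ ⟨c₂, h₂⟩ h
    have hx : ∀ x, p x → c₁ x = c₂ x := fun x hx => congrFun h ⟨x, hx⟩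
    have hcc : c₁ = c₂ := by
      funext v
      by_cases hv : p v
      · exact hx v hv
      · rw [← h₁ v, ← h₂ v]
        exact hf v c₁ c₂ (fun u hu => hx u (hp v hv u hu))
    simpa using hcc
  calc Nat.card {c : Fin n → Fin s // ∀ v, f v c = c v}
      ≤ Nat.card ({x // p x} → Fin s) := Nat.card_le_card_of_injective _ hinj
    _ = s ^ Fintype.card {x // p x} := by
        rw [Nat.card_fun]
        simp [Nat.card_eq_fintype_card]

lemma maxFixedPoints_mem_le {G : SimpleGraph (Fin n)} (hn : 1 ≤ n) :
    ∀ m ∈ {m : ℕ | ∃ f : Fin n → (Fin n → Fin s) → Fin s, IsGuessingStrategy G s f ∧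
      m = Nat.card {c : Fin n → Fin s // ∀ v, f v c = c v}}, m ≤ s ^ (n - 1) := by
  rintro m ⟨f, hf, rfl⟩
  have v0 : Fin n := ⟨0, hn⟩
  have key := card_fixed_le_aux hf (fun x => x ≠ v0)
    (fun v hv u hu => by
      simp only [not_not] at hv
      subst hv
      exact (G.ne_of_adj hu).symm)
  have hcard : Fintype.card {x : Fin n // x ≠ v0} = n - 1 := by
    have := Fintype.card_subtype_compl (fun x : Fin n => x = v0)
    simpa [Fintype.card_subtype_eq] using this
  rw [hcard] at key
  exact key

lemma bddAbove_fixedSet {G : SimpleGraph (Fin n)} (hn : 1 ≤ n) :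
    BddAbove {m : ℕ | ∃ f : Fin n → (Fin n → Fin s) → Fin s, IsGuessingStrategy G s f ∧
      m = Nat.card {c : Fin n → Fin s // ∀ v, f v c = c v}} :=
  ⟨s ^ (n - 1), fun m hm => maxFixedPoints_mem_le hn m hm⟩

lemma one_le_maxFixedPoints {G : SimpleGraph (Fin n)} (hn : 1 ≤ n) (hs : 2 ≤ s) :
    1 ≤ maxFixedPoints G s := by
  haveI : NeZero s := ⟨by omega⟩
  refine le_csSup (bddAbove_fixedSet hn) ?_
  refine ⟨fun _ _ => 0, fun v c₁ c₂ _ => rfl, ?_⟩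
  haveI : Unique {c : Fin n → Fin s // ∀ v, (0 : Fin s) = c v} :=
    { default := ⟨fun _ => 0, fun _ => rfl⟩
      uniq := fun c => by
        apply Subtype.ext
        funext v
        exact (c.2 v).symm }
  exact (Nat.card_unique).symm

lemma maxFixedPoints_le_of_notAdj {G : SimpleGraph (Fin n)} {u w : Fin n}
    (hne : u ≠ w) (hadj : ¬ G.Adj u w) :
    maxFixedPoints G s ≤ s ^ (n - 2) := by
  apply csSup_le'
  rintro m ⟨f, hf, rfl⟩
  have key := card_fixed_le_aux hf (fun x => x ≠ u ∧ x ≠ w)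
    (fun v hv x hx => by
      simp only [not_and_or, not_not] at hv
      rcases hv with rfl | rfl
      · exact ⟨(G.ne_of_adj hx).symm, fun hxw => hadj (hxw ▸ hx)⟩
      · refine ⟨fun hxu => hadj (G.adj_symm (hxu ▸ hx)), (G.ne_of_adj hx).symm⟩)
  have hcard : Fintype.card {x : Fin n // x ≠ u ∧ x ≠ w} = n - 2 := by
    have h1 : Fintype.card {x : Fin n // x = u ∨ x = w} = 2 := by
      rw [Fintype.card_congr (Equiv.subtypeEquivRight
        (q := fun x => x ∈ ({u, w} : Finset (Fin n))) (fun x => by simp))]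
      rw [Fintype.card_coe, Finset.card_insert_of_notMem (by simp [hne]),
        Finset.card_singleton]
    have h2 : Fintype.card {x : Fin n // ¬(x = u ∨ x = w)} = n - 2 := by
      have := Fintype.card_subtype_compl (fun x : Fin n => x = u ∨ x = w)
      simpa [h1] using this
    rw [← h2]
    exact Fintype.card_congr (Equiv.subtypeEquivRight (fun x => by push_neg; rfl))
  rw [hcard] at key
  exact key

lemma maxFixedPoints_top (hn : 1 ≤ n) (hs : 2 ≤ s) :
    maxFixedPoints (⊤ : SimpleGraph (Fin n)) s = s ^ (n - 1) := by
  haveI : NeZero s := ⟨by omega⟩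
  set v0 : Fin n := ⟨0, hn⟩ with hv0
  set f : Fin n → (Fin n → Fin s) → Fin s :=
    fun v c => - ∑ u ∈ univ.erase v, c u with hfdef
  have hstrat : IsGuessingStrategy (⊤ : SimpleGraph (Fin n)) s f := by
    intro v c₁ c₂ h
    simp only [hfdef, neg_inj]
    refine Finset.sum_congr rfl (fun u hu => ?_)
    exact h u (by simpa [ne_comm] using (Finset.mem_erase.mp hu).1)
  have hfix : ∀ c : Fin n → Fin s, (∀ v, f v c = c v) ↔ ∑ v, c v = 0 := by
    intro c
    constructor
    · intro h
      have := h v0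
      simp only [hfdef, neg_eq_iff_eq_neg] at this
      rw [← Finset.add_sum_erase univ c (Finset.mem_univ v0), this]
      abel
    · intro h v
      have he : ∑ u ∈ univ.erase v, c u = - c v := by
        have := Finset.add_sum_erase univ c (Finset.mem_univ v)
        rw [h] at this
        linear_combination (norm := abel1) this
      simp only [hfdef, he, neg_neg]
  -- an equivalence between zero-sum colorings and colorings of `Fin n \ {v0}`
  have hsub : ∀ c : Fin n → Fin s,
      ∑ x : {x : Fin n // x ≠ v0}, c x.1 = ∑ u ∈ univ.erase v0, c u := by
    intro c
    exact (Finset.sum_subtype (univ.erase v0) (fun x => by simp) c).symm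
  let e : {c : Fin n → Fin s // ∑ v, c v = 0} ≃ ({x : Fin n // x ≠ v0} → Fin s) :=
    { toFun := fun c x => c.1 x.1
      invFun := fun g => ⟨fun v => if h : v = v0 then - ∑ x : {x : Fin n // x ≠ v0}, g x
          else g ⟨v, h⟩, by
        set cg : Fin n → Fin s := fun v => if h : v = v0 then
            - ∑ x : {x : Fin n // x ≠ v0}, g x else g ⟨v, h⟩ with hcg
        have h1 : ∑ u ∈ univ.erase v0, cg u = ∑ x : {x : Fin n // x ≠ v0}, g x := by
          rw [← hsub cg]
          refine Finset.sum_congr rfl (fun x _ => ?_) |>.symm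
          simp [hcg, x.2]
        rw [← Finset.add_sum_erase univ cg (Finset.mem_univ v0), h1]
        simp [hcg]⟩
      left_inv := fun c => by
        apply Subtype.ext
        funext v
        by_cases h : v = v0
        · subst h
          simp only [dif_pos]
          have h1 : ∑ x : {x : Fin n // x ≠ v0}, c.1 x.1 = - c.1 v0 := by
            rw [hsub c.1]
            have := Finset.add_sum_erase univ c.1 (Finset.mem_univ v0)
            rw [c.2] at this
            linear_combination (norm := abel1) this
          rw [h1, neg_neg]
        · simp [h]
      right_inv := fun g => by
        funext x
        simp [x.2] }
  have hcard : Nat.card {c : Fin n → Fin s // ∀ v, f v c = c v} = s ^ (n - 1) := by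
    rw [Nat.card_congr ((Equiv.subtypeEquivRight hfix).trans e), Nat.card_fun]
    have hcard' : Fintype.card {x : Fin n // x ≠ v0} = n - 1 := by
      have := Fintype.card_subtype_compl (fun x : Fin n => x = v0)
      simpa [Fintype.card_subtype_eq] using this
    simp [Nat.card_eq_fintype_card, hcard']
  refine le_antisymm (csSup_le' (maxFixedPoints_mem_le hn)) ?_
  exact le_csSup (bddAbove_fixedSet hn) ⟨f, hstrat, hcard.symm⟩

end Aux

/-- For `s ≥ 2` and a graph `G` on `n ≥ 1` vertices, `gn(G,s) = n - 1` iff `G`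
is the complete graph `K_n`. -/
theorem guessingNumber_eq_iff_complete (n s : ℕ) (hn : 1 ≤ n) (hs : 2 ≤ s)
    (G : SimpleGraph (Fin n)) :
    guessingNumber G s = (n : ℝ) - 1 ↔ G = ⊤ := by
  have hs1 : (1 : ℝ) < s := by exact_mod_cast hs
  constructor
  · intro h
    by_contra hG
    obtain ⟨u, w, hne, hadj⟩ : ∃ u w : Fin n, u ≠ w ∧ ¬ G.Adj u w := by
      by_contra h'
      push_neg at h'
      exact hG (by ext u w; exact ⟨fun hadj => G.ne_of_adj hadj, fun hne => h' u w hne⟩)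
    have hn2 : 2 ≤ n := by
      have : Nontrivial (Fin n) := ⟨u, w, hne⟩
      exact (by simpa using Fintype.one_lt_card_iff_nontrivial.mpr this : 1 < n)
    have hle : maxFixedPoints G s ≤ s ^ (n - 2) := maxFixedPoints_le_of_notAdj hne hadj
    have h1 : 1 ≤ maxFixedPoints G s := one_le_maxFixedPoints hn hs
    have hlogb : guessingNumber G s ≤ Real.logb s ((s : ℝ) ^ (n - 2)) := by
      unfold guessingNumber
      rw [Real.logb_le_logb hs1 (by exact_mod_cast h1) (by positivity)]
      exact_mod_cast hle
    rw [h, Real.logb_pow, Real.logb_self_eq_one hs1, mul_one] at hlogb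
    have : ((n - 2 : ℕ) : ℝ) = (n : ℝ) - 2 := by
      rw [Nat.cast_sub hn2]; norm_num
    rw [this] at hlogb
    linarith
  · rintro rfl
    unfold guessingNumber
    rw [maxFixedPoints_top hn hs]
    push_cast
    rw [Real.logb_pow, Real.logb_self_eq_one hs1, mul_one, Nat.cast_sub hn]
    norm_num
end

section
/- For every integer n ≥ 5 and every integer s ≥ 2, the graph C_5 + E_{n−5}, the disjoint union of a 5-cycle with n−5 isolated vertices, is (gn_s ≥ 3)-saturated; consequently, sat(n, gn_s ≥ 3) ≤ 5. -/
open SimpleGraph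

lemma adjG {n : ℕ} (x y : Fin n) :
    (withIsolated (cycleGraph 5) n).Adj x y ↔
      (x : ℕ) < 5 ∧ (y : ℕ) < 5 ∧ x.val ≠ y.val ∧
        (((x : ℕ) + 1) % 5 = (y : ℕ) ∨ ((y : ℕ) + 1) % 5 = (x : ℕ)) := by
  unfold withIsolated
  rw [fromRel_adj]
  constructor
  · rintro ⟨hne, (⟨hu, hv, hadj⟩ | ⟨hu, hv, hadj⟩)⟩ <;>
    · rw [cycleGraph_adj'] at hadj
      simp only [Fin.sub_def] at hadj
      have hne' : x.val ≠ y.val := fun h => hne (Fin.ext h)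
      refine ⟨by omega, by omega, hne', by omega⟩
  · rintro ⟨hx, hy, hne, hcyc⟩
    refine ⟨fun h => hne (by rw [h]), ?_⟩
    left
    refine ⟨hx, hy, ?_⟩
    rw [cycleGraph_adj']
    simp only [Fin.sub_def]
    omega

lemma fpSet_bddAbove {n s : ℕ} (G : SimpleGraph (Fin n)) :
    BddAbove {m : ℕ | ∃ f : Fin n → (Fin n → Fin s) → Fin s, IsGuessingStrategy G s f ∧
      m = Nat.card {c : Fin n → Fin s // ∀ v, f v c = c v}} := by
  refine ⟨s ^ n, fun m hm => ?_⟩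
  obtain ⟨f, -, rfl⟩ := hm
  calc Nat.card {c : Fin n → Fin s // ∀ v, f v c = c v}
      ≤ Nat.card (Fin n → Fin s) :=
        Nat.card_le_card_of_injective Subtype.val Subtype.val_injective
    _ = s ^ n := by simp [Nat.card_eq_fintype_card]

lemma three_le_gn {n s : ℕ} (hs : 2 ≤ s) (G : SimpleGraph (Fin n))
    (f : Fin n → (Fin n → Fin s) → Fin s) (hf : IsGuessingStrategy G s f)
    (ι : Fin s × Fin s × Fin s → {c : Fin n → Fin s // ∀ v, f v c = c v})
    (hι : Function.Injective ι) : 3 ≤ guessingNumber G s := by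
  have hcard : s ^ 3 ≤ Nat.card {c : Fin n → Fin s // ∀ v, f v c = c v} := by
    have := Nat.card_le_card_of_injective ι hι
    simpa [Nat.card_eq_fintype_card, pow_succ, mul_comm, mul_assoc] using this
  have hmem : Nat.card {c : Fin n → Fin s // ∀ v, f v c = c v} ∈
      {m : ℕ | ∃ f : Fin n → (Fin n → Fin s) → Fin s, IsGuessingStrategy G s f ∧
        m = Nat.card {c : Fin n → Fin s // ∀ v, f v c = c v}} := ⟨f, hf, rfl⟩
  have hle : s ^ 3 ≤ maxFixedPoints G s :=
    le_trans hcard (le_csSup (fpSet_bddAbove G) hmem)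
  have hb : (1 : ℝ) < s := by exact_mod_cast hs.trans_lt' one_lt_two
  have h3 : (3 : ℝ) = Real.logb s ((s : ℝ) ^ (3 : ℕ)) := by
    rw [Real.logb_pow, Real.logb_self_eq_one hb]
    norm_num
  rw [guessingNumber, h3]
  apply Real.logb_le_logb_of_le hb (by positivity)
  exact_mod_cast hle

def mcol {n s : ℕ} [NeZero s] (a₁ a₂ b₁ b₂ c₁ c₂ : Fin n) (x y z : Fin s) :
    Fin n → Fin s := fun v =>
  if v = a₁ ∨ v = a₂ then x else if v = b₁ ∨ v = b₂ then y else
  if v = c₁ ∨ v = c₂ then z else 0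

lemma matching3_gn {n s : ℕ} (hs : 2 ≤ s) (G : SimpleGraph (Fin n))
    (a₁ a₂ b₁ b₂ c₁ c₂ : Fin n)
    (hab : G.Adj a₁ a₂) (hbb : G.Adj b₁ b₂) (hcc : G.Adj c₁ c₂)
    (h13 : a₁ ≠ b₁) (h14 : a₁ ≠ b₂) (h15 : a₁ ≠ c₁) (h16 : a₁ ≠ c₂)
    (h23 : a₂ ≠ b₁) (h24 : a₂ ≠ b₂) (h25 : a₂ ≠ c₁) (h26 : a₂ ≠ c₂)
    (h35 : b₁ ≠ c₁) (h36 : b₁ ≠ c₂) (h45 : b₂ ≠ c₁) (h46 : b₂ ≠ c₂) :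
    3 ≤ guessingNumber G s := by
  haveI : NeZero s := ⟨by omega⟩
  have h12 : a₁ ≠ a₂ := hab.ne
  have h34 : b₁ ≠ b₂ := hbb.ne
  have h56 : c₁ ≠ c₂ := hcc.ne
  have ea1 : ∀ x y z : Fin s, mcol a₁ a₂ b₁ b₂ c₁ c₂ x y z a₁ = x := by
    intro x y z; simp [mcol]
  have ea2 : ∀ x y z : Fin s, mcol a₁ a₂ b₁ b₂ c₁ c₂ x y z a₂ = x := by
    intro x y z; simp [mcol]
  have eb1 : ∀ x y z : Fin s, mcol a₁ a₂ b₁ b₂ c₁ c₂ x y z b₁ = y := by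
    intro x y z; simp [mcol, Ne.symm h13, Ne.symm h23]
  have eb2 : ∀ x y z : Fin s, mcol a₁ a₂ b₁ b₂ c₁ c₂ x y z b₂ = y := by
    intro x y z; simp [mcol, Ne.symm h14, Ne.symm h24]
  have ec1 : ∀ x y z : Fin s, mcol a₁ a₂ b₁ b₂ c₁ c₂ x y z c₁ = z := by
    intro x y z; simp [mcol, Ne.symm h15, Ne.symm h25, Ne.symm h35, Ne.symm h45]
  have ec2 : ∀ x y z : Fin s, mcol a₁ a₂ b₁ b₂ c₁ c₂ x y z c₂ = z := by
    intro x y z; simp [mcol, Ne.symm h16, Ne.symm h26, Ne.symm h36, Ne.symm h46]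
  refine three_le_gn hs G
    (fun v c => if v = a₁ then c a₂ else if v = a₂ then c a₁ else
      if v = b₁ then c b₂ else if v = b₂ then c b₁ else
      if v = c₁ then c c₂ else if v = c₂ then c c₁ else 0) ?_
    (fun p => ⟨mcol a₁ a₂ b₁ b₂ c₁ c₂ p.1 p.2.1 p.2.2, ?_⟩) ?_
  · intro v d₁ d₂ hag
    simp only
    split_ifs with e1 e2 e3 e4 e5 e6
    · exact hag _ (by rw [e1]; exact hab)
    · exact hag _ (by rw [e2]; exact hab.symm)
    · exact hag _ (by rw [e3]; exact hbb)
    · exact hag _ (by rw [e4]; exact hbb.symm)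
    · exact hag _ (by rw [e5]; exact hcc)
    · exact hag _ (by rw [e6]; exact hcc.symm)
    · rfl
  · intro v
    rcases eq_or_ne v a₁ with rfl | hv1
    · rw [if_pos rfl, ea2, ea1]
    rw [if_neg hv1]
    rcases eq_or_ne v a₂ with rfl | hv2
    · rw [if_pos rfl, ea1, ea2]
    rw [if_neg hv2]
    rcases eq_or_ne v b₁ with rfl | hv3
    · rw [if_pos rfl, eb2, eb1]
    rw [if_neg hv3]
    rcases eq_or_ne v b₂ with rfl | hv4
    · rw [if_pos rfl, eb1, eb2]
    rw [if_neg hv4]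
    rcases eq_or_ne v c₁ with rfl | hv5
    · rw [if_pos rfl, ec2, ec1]
    rw [if_neg hv5]
    rcases eq_or_ne v c₂ with rfl | hv6
    · rw [if_pos rfl, ec1, ec2]
    rw [if_neg hv6]
    simp [mcol, hv1, hv2, hv3, hv4, hv5, hv6]
  · intro p q hpq
    have h := congrArg Subtype.val hpq
    have h1 := congrFun h a₁
    have h2 := congrFun h b₁
    have h3 := congrFun h c₁
    simp only [ea1] at h1
    simp only [eb1] at h2
    simp only [ec1] at h3
    exact Prod.ext h1 (Prod.ext h2 h3)

def tcol {n s : ℕ} [NeZero s] (t₁ t₂ t₃ e₁ e₂ : Fin n) (x y d : Fin s) :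
    Fin n → Fin s := fun v =>
  if v = t₁ then x else if v = t₂ then y else if v = t₃ then -(x + y) else
  if v = e₁ ∨ v = e₂ then d else 0

lemma triangle_edge_gn {n s : ℕ} (hs : 2 ≤ s) (G : SimpleGraph (Fin n))
    (t₁ t₂ t₃ e₁ e₂ : Fin n)
    (h12 : G.Adj t₁ t₂) (h13 : G.Adj t₁ t₃) (h23 : G.Adj t₂ t₃) (hee : G.Adj e₁ e₂)
    (h14 : t₁ ≠ e₁) (h15 : t₁ ≠ e₂) (h24 : t₂ ≠ e₁) (h25 : t₂ ≠ e₂)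
    (h34 : t₃ ≠ e₁) (h35 : t₃ ≠ e₂) :
    3 ≤ guessingNumber G s := by
  haveI : NeZero s := ⟨by omega⟩
  have n12 : t₁ ≠ t₂ := h12.ne
  have n13 : t₁ ≠ t₃ := h13.ne
  have n23 : t₂ ≠ t₃ := h23.ne
  have n45 : e₁ ≠ e₂ := hee.ne
  have et1 : ∀ x y d : Fin s, tcol t₁ t₂ t₃ e₁ e₂ x y d t₁ = x := by
    intro x y d; simp [tcol]
  have et2 : ∀ x y d : Fin s, tcol t₁ t₂ t₃ e₁ e₂ x y d t₂ = y := by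
    intro x y d; simp [tcol, Ne.symm n12]
  have et3 : ∀ x y d : Fin s, tcol t₁ t₂ t₃ e₁ e₂ x y d t₃ = -(x + y) := by
    intro x y d; simp [tcol, Ne.symm n13, Ne.symm n23]
  have ee1 : ∀ x y d : Fin s, tcol t₁ t₂ t₃ e₁ e₂ x y d e₁ = d := by
    intro x y d; simp [tcol, Ne.symm h14, Ne.symm h24, Ne.symm h34]
  have ee2 : ∀ x y d : Fin s, tcol t₁ t₂ t₃ e₁ e₂ x y d e₂ = d := by
    intro x y d; simp [tcol, Ne.symm h15, Ne.symm h25, Ne.symm h35]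
  refine three_le_gn hs G
    (fun v c => if v = t₁ then -(c t₂ + c t₃) else if v = t₂ then -(c t₁ + c t₃) else
      if v = t₃ then -(c t₁ + c t₂) else if v = e₁ then c e₂ else
      if v = e₂ then c e₁ else 0) ?_
    (fun p => ⟨tcol t₁ t₂ t₃ e₁ e₂ p.1 p.2.1 p.2.2, ?_⟩) ?_
  · intro v d₁ d₂ hag
    simp only
    split_ifs with g1 g2 g3 g4 g5
    · rw [hag _ (by rw [g1]; exact h12), hag _ (by rw [g1]; exact h13)]
    · rw [hag _ (by rw [g2]; exact h12.symm), hag _ (by rw [g2]; exact h23)]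
    · rw [hag _ (by rw [g3]; exact h13.symm), hag _ (by rw [g3]; exact h23.symm)]
    · exact hag _ (by rw [g4]; exact hee)
    · exact hag _ (by rw [g5]; exact hee.symm)
    · rfl
  · intro v
    rcases eq_or_ne v t₁ with rfl | hv1
    · rw [if_pos rfl, et2, et3, et1]; abel
    rw [if_neg hv1]
    rcases eq_or_ne v t₂ with rfl | hv2
    · rw [if_pos rfl, et1, et3, et2]; abel
    rw [if_neg hv2]
    rcases eq_or_ne v t₃ with rfl | hv3
    · rw [if_pos rfl, et1, et2, et3]
    rw [if_neg hv3]
    rcases eq_or_ne v e₁ with rfl | hv4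
    · rw [if_pos rfl, ee2, ee1]
    rw [if_neg hv4]
    rcases eq_or_ne v e₂ with rfl | hv5
    · rw [if_pos rfl, ee1, ee2]
    rw [if_neg hv5]
    simp [tcol, hv1, hv2, hv3, hv4, hv5]
  · intro p q hpq
    have h := congrArg Subtype.val hpq
    have h1 := congrFun h t₁
    have h2 := congrFun h t₂
    have h3 := congrFun h e₁
    simp only [et1] at h1
    simp only [et2] at h2
    simp only [ee1] at h3
    exact Prod.ext h1 (Prod.ext h2 h3)

set_option maxHeartbeats 2000000 in
lemma fp_lt_cube {n s : ℕ} (hn : 5 ≤ n) (hs : 2 ≤ s)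
    (f : Fin n → (Fin n → Fin s) → Fin s)
    (hf : IsGuessingStrategy (withIsolated (cycleGraph 5) n) s f) :
    Nat.card {c : Fin n → Fin s // ∀ v, f v c = c v} < s ^ 3 := by
  haveI : NeZero s := ⟨by omega⟩
  set G := withIsolated (cycleGraph 5) n with hG
  set v0 : Fin n := ⟨0, by omega⟩ with hv0
  set v1 : Fin n := ⟨1, by omega⟩ with hv1
  set v2 : Fin n := ⟨2, by omega⟩ with hv2
  set v3 : Fin n := ⟨3, by omega⟩ with hv3
  set v4 : Fin n := ⟨4, by omega⟩ with hv4
  have nb0 : ∀ u, G.Adj v0 u → u = v1 ∨ u = v4 := by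
    intro u hu
    obtain ⟨-, h2, -, h4⟩ := (adjG _ _).1 hu
    have : (u : ℕ) = 1 ∨ (u : ℕ) = 4 := by simp only [hv0] at h4; omega
    rcases this with h | h
    · exact Or.inl (Fin.ext (by simp [hv1, h]))
    · exact Or.inr (Fin.ext (by simp [hv4, h]))
  have nb1 : ∀ u, G.Adj v1 u → u = v0 ∨ u = v2 := by
    intro u hu
    obtain ⟨-, h2, -, h4⟩ := (adjG _ _).1 hu
    have : (u : ℕ) = 0 ∨ (u : ℕ) = 2 := by simp only [hv1] at h4; omega
    rcases this with h | h
    · exact Or.inl (Fin.ext (by simp [hv0, h]))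
    · exact Or.inr (Fin.ext (by simp [hv2, h]))
  have nb2 : ∀ u, G.Adj v2 u → u = v1 ∨ u = v3 := by
    intro u hu
    obtain ⟨-, h2, -, h4⟩ := (adjG _ _).1 hu
    have : (u : ℕ) = 1 ∨ (u : ℕ) = 3 := by simp only [hv2] at h4; omega
    rcases this with h | h
    · exact Or.inl (Fin.ext (by simp [hv1, h]))
    · exact Or.inr (Fin.ext (by simp [hv3, h]))
  have nb3 : ∀ u, G.Adj v3 u → u = v2 ∨ u = v4 := by
    intro u hu
    obtain ⟨-, h2, -, h4⟩ := (adjG _ _).1 hu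
    have : (u : ℕ) = 2 ∨ (u : ℕ) = 4 := by simp only [hv3] at h4; omega
    rcases this with h | h
    · exact Or.inl (Fin.ext (by simp [hv2, h]))
    · exact Or.inr (Fin.ext (by simp [hv4, h]))
  have nb4 : ∀ u, G.Adj v4 u → u = v3 ∨ u = v0 := by
    intro u hu
    obtain ⟨-, h2, -, h4⟩ := (adjG _ _).1 hu
    have : (u : ℕ) = 3 ∨ (u : ℕ) = 0 := by simp only [hv4] at h4; omega
    rcases this with h | h
    · exact Or.inl (Fin.ext (by simp [hv3, h]))
    · exact Or.inr (Fin.ext (by simp [hv0, h]))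
  have iso : ∀ v : Fin n, 5 ≤ (v : ℕ) → ∀ u, ¬ G.Adj v u := by
    intro v h5 u hu
    obtain ⟨h1, -, -⟩ := (adjG _ _).1 hu
    omega
  -- well-definedness lemmas
  have eval0 : ∀ c c' : Fin n → Fin s, (∀ v, f v c = c v) → (∀ v, f v c' = c' v) →
      c v1 = c' v1 → c v4 = c' v4 → c v0 = c' v0 := by
    intro c c' hc hc' h1 h4
    rw [← hc v0, ← hc' v0]
    apply hf
    intro u hu
    rcases nb0 u hu with rfl | rfl
    · exact h1
    · exact h4
  have eval2 : ∀ c c' : Fin n → Fin s, (∀ v, f v c = c v) → (∀ v, f v c' = c' v) →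
      c v1 = c' v1 → c v3 = c' v3 → c v2 = c' v2 := by
    intro c c' hc hc' h1 h3
    rw [← hc v2, ← hc' v2]
    apply hf
    intro u hu
    rcases nb2 u hu with rfl | rfl
    · exact h1
    · exact h3
  -- the projection
  obtain ⟨Φ, hΦdef⟩ : ∃ Φ : {c : Fin n → Fin s // ∀ v, f v c = c v} → Fin s × Fin s × Fin s,
      ∀ c, Φ c = (c.val v1, c.val v3, c.val v4) := ⟨_, fun _ => rfl⟩
  have hΦinj : Function.Injective Φ := by
    intro c c' hcc
    rw [hΦdef, hΦdef] at hcc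
    have h1 : c.val v1 = c'.val v1 := congrArg Prod.fst hcc
    have h3 : c.val v3 = c'.val v3 := congrArg (fun p => p.2.1) hcc
    have h4 : c.val v4 = c'.val v4 := congrArg (fun p => p.2.2) hcc
    apply Subtype.ext
    funext v
    by_cases hv : (v : ℕ) < 5
    · have hcase : v = v0 ∨ v = v1 ∨ v = v2 ∨ v = v3 ∨ v = v4 := by
        have : (v:ℕ) = 0 ∨ (v:ℕ) = 1 ∨ (v:ℕ) = 2 ∨ (v:ℕ) = 3 ∨ (v:ℕ) = 4 := by omega
        rcases this with h|h|h|h|h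
        · exact Or.inl (Fin.ext (by simp [hv0, h]))
        · exact Or.inr (Or.inl (Fin.ext (by simp [hv1, h])))
        · exact Or.inr (Or.inr (Or.inl (Fin.ext (by simp [hv2, h]))))
        · exact Or.inr (Or.inr (Or.inr (Or.inl (Fin.ext (by simp [hv3, h])))))
        · exact Or.inr (Or.inr (Or.inr (Or.inr (Fin.ext (by simp [hv4, h])))))
      rcases hcase with rfl|rfl|rfl|rfl|rfl
      · exact eval0 c.val c'.val c.prop c'.prop h1 h4
      · exact h1
      · exact eval2 c.val c'.val c.prop c'.prop h1 h3
      · exact h3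
      · exact h4
    · rw [← c.prop v, ← c'.prop v]
      exact hf v c.val c'.val (fun u hu => absurd hu (iso v (by omega) u))
  have hcard3 : Nat.card (Fin s × Fin s × Fin s) = s ^ 3 := by
    simp [Nat.card_eq_fintype_card]; ring
  by_contra hcon
  push_neg at hcon
  have hle : Nat.card {c : Fin n → Fin s // ∀ v, f v c = c v} ≤ s ^ 3 := by
    have h := Nat.card_le_card_of_injective Φ hΦinj
    rwa [hcard3] at h
  have heq : Nat.card {c : Fin n → Fin s // ∀ v, f v c = c v} = s ^ 3 := le_antisymm hle hcon
  have hΦbij : Function.Bijective Φ :=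
    (Nat.bijective_iff_injective_and_card Φ).mpr ⟨hΦinj, by rw [heq, hcard3]⟩
  obtain ⟨C, hC⟩ : ∃ C : Fin s × Fin s × Fin s → {c : Fin n → Fin s // ∀ v, f v c = c v},
      ∀ p, Φ (C p) = p :=
    ⟨Function.surjInv hΦbij.surjective, Function.surjInv_eq hΦbij.surjective⟩
  have cv1 : ∀ a b d : Fin s, (C (a, b, d)).val v1 = a := by
    intro a b d
    have h := hC (a, b, d)
    rw [hΦdef] at h
    exact congrArg Prod.fst h
  have cv3 : ∀ a b d : Fin s, (C (a, b, d)).val v3 = b := by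
    intro a b d
    have h := hC (a, b, d)
    rw [hΦdef] at h
    exact congrArg (fun p => p.2.1) h
  have cv4 : ∀ a b d : Fin s, (C (a, b, d)).val v4 = d := by
    intro a b d
    have h := hC (a, b, d)
    rw [hΦdef] at h
    exact congrArg (fun p => p.2.2) h
  obtain ⟨g, hgdef⟩ : ∃ g : Fin s → Fin s → Fin s,
      ∀ a d, g a d = (C (a, 0, d)).val v0 := ⟨_, fun _ _ => rfl⟩
  obtain ⟨hh, hhdef⟩ : ∃ hh : Fin s → Fin s → Fin s,
      ∀ a b, hh a b = (C (a, b, 0)).val v2 := ⟨_, fun _ _ => rfl⟩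
  have hg : ∀ a b d, (C (a, b, d)).val v0 = g a d := by
    intro a b d
    rw [hgdef]
    apply eval0 _ _ (C (a,b,d)).prop (C (a,0,d)).prop
    · rw [cv1, cv1]
    · rw [cv4, cv4]
  have hhs : ∀ a b d, (C (a, b, d)).val v2 = hh a b := by
    intro a b d
    rw [hhdef]
    apply eval2 _ _ (C (a,b,d)).prop (C (a,b,0)).prop
    · rw [cv1, cv1]
    · rw [cv3, cv3]
  obtain ⟨e1, he1def⟩ : ∃ e1 : Fin s → Fin s → Fin s,
      ∀ x y, e1 x y = f v1 (fun v => if v = v0 then x else if v = v2 then y else 0) :=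
    ⟨_, fun _ _ => rfl⟩
  obtain ⟨e3, he3def⟩ : ∃ e3 : Fin s → Fin s → Fin s,
      ∀ y d, e3 y d = f v3 (fun v => if v = v2 then y else if v = v4 then d else 0) :=
    ⟨_, fun _ _ => rfl⟩
  obtain ⟨e4, he4def⟩ : ∃ e4 : Fin s → Fin s → Fin s,
      ∀ b x, e4 b x = f v4 (fun v => if v = v3 then b else if v = v0 then x else 0) :=
    ⟨_, fun _ _ => rfl⟩
  have nv20 : v2 ≠ v0 := by simp [hv2, hv0, Fin.ext_iff]
  have nv42 : v4 ≠ v2 := by simp [hv4, hv2, Fin.ext_iff]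
  have nv03 : v0 ≠ v3 := by simp [hv0, hv3, Fin.ext_iff]
  have he1 : ∀ c : Fin n → Fin s, (∀ v, f v c = c v) → c v1 = e1 (c v0) (c v2) := by
    intro c hc
    rw [← hc v1, he1def]
    apply hf
    intro u hu
    rcases nb1 u hu with rfl | rfl
    · simp
    · simp [nv20]
  have he3 : ∀ c : Fin n → Fin s, (∀ v, f v c = c v) → c v3 = e3 (c v2) (c v4) := by
    intro c hc
    rw [← hc v3, he3def]
    apply hf
    intro u hu
    rcases nb3 u hu with rfl | rfl
    · simp
    · simp [nv42]
  have he4 : ∀ c : Fin n → Fin s, (∀ v, f v c = c v) → c v4 = e4 (c v3) (c v0) := by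
    intro c hc
    rw [← hc v4, he4def]
    apply hf
    intro u hu
    rcases nb4 u hu with rfl | rfl
    · simp
    · simp [nv03]
  have relA : ∀ a b d, d = e4 b (g a d) := by
    intro a b d
    have h := he4 (C (a,b,d)).val (C (a,b,d)).prop
    rwa [cv4, cv3, hg] at h
  have relB : ∀ a b d, a = e1 (g a d) (hh a b) := by
    intro a b d
    have h := he1 (C (a,b,d)).val (C (a,b,d)).prop
    rwa [cv1, hg, hhs] at h
  have relC : ∀ a b d, b = e3 (hh a b) d := by
    intro a b d
    have h := he3 (C (a,b,d)).val (C (a,b,d)).prop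
    rwa [cv3, hhs, cv4] at h
  have hsurj : ∀ a, Function.Surjective (hh a) := by
    intro a
    rw [← Finite.injective_iff_surjective]
    intro b b' hb
    have h1 := relC a b 0
    have h2 := relC a b' 0
    rw [hb] at h1
    exact h1.trans h2.symm
  have ginj : Function.Injective (fun p : Fin s × Fin s => g p.1 p.2) := by
    rintro ⟨a, d⟩ ⟨a', d'⟩ hgg
    simp only at hgg
    have hd : d = d' := by
      have h1 := relA a 0 d
      have h2 := relA a' 0 d'
      rw [hgg] at h1
      exact h1.trans h2.symm
    obtain ⟨b', hb'⟩ := hsurj a' (hh a 0)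
    have h1 := relB a 0 d
    have h2 := relB a' b' d'
    rw [hb', ← hgg, ← h1] at h2
    exact Prod.ext h2.symm hd
  have hfinal : Nat.card (Fin s × Fin s) ≤ Nat.card (Fin s) :=
    Nat.card_le_card_of_injective _ ginj
  simp [Nat.card_eq_fintype_card] at hfinal
  nlinarith

lemma gn_lt_three {n s : ℕ} (hn : 5 ≤ n) (hs : 2 ≤ s) :
    guessingNumber (withIsolated (cycleGraph 5) n) s < 3 := by
  haveI : NeZero s := ⟨by omega⟩
  have hb : (1 : ℝ) < s := by exact_mod_cast hs.trans_lt' one_lt_two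
  set S := {m : ℕ | ∃ f : Fin n → (Fin n → Fin s) → Fin s,
    IsGuessingStrategy (withIsolated (cycleGraph 5) n) s f ∧
    m = Nat.card {c : Fin n → Fin s // ∀ v, f v c = c v}} with hS
  have hne : S.Nonempty := by
    refine ⟨_, (fun _ _ => 0), fun _ _ _ _ => rfl, rfl⟩
  have hmem : maxFixedPoints (withIsolated (cycleGraph 5) n) s ∈ S :=
    Nat.sSup_mem hne (fpSet_bddAbove _)
  obtain ⟨f, hf, hmf⟩ := hmem
  have hlt : maxFixedPoints (withIsolated (cycleGraph 5) n) s < s ^ 3 := by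
    rw [hmf]; exact fp_lt_cube hn hs f hf
  rw [guessingNumber]
  rcases Nat.eq_zero_or_pos (maxFixedPoints (withIsolated (cycleGraph 5) n) s) with h0 | hpos
  · rw [h0]
    norm_num
  · have h3 : (3 : ℝ) = Real.logb s ((s : ℝ) ^ (3 : ℕ)) := by
      rw [Real.logb_pow, Real.logb_self_eq_one hb]
      norm_num
    rw [h3]
    apply Real.logb_lt_logb hb (by exact_mod_cast hpos)
    exact_mod_cast hlt

lemma edge_count {n : ℕ} (hn : 5 ≤ n) :
    Nat.card (withIsolated (cycleGraph 5) n).edgeSet = 5 := by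
  have hlt : ∀ i : Fin 5, (i : ℕ) < n := fun i => lt_of_lt_of_le i.isLt hn
  have hlt' : ∀ i : Fin 5, ((i : ℕ) + 1) % 5 < n := fun i => by
    have : ((i : ℕ) + 1) % 5 < 5 := Nat.mod_lt _ (by omega)
    omega
  have hmem : ∀ i : Fin 5,
      s((⟨(i : ℕ), hlt i⟩ : Fin n), (⟨((i : ℕ) + 1) % 5, hlt' i⟩ : Fin n)) ∈
        (withIsolated (cycleGraph 5) n).edgeSet := by
    intro i
    rw [SimpleGraph.mem_edgeSet, adjG]
    have := i.isLt
    refine ⟨by simpa using this, by simpa using Nat.mod_lt _ (by omega), by simp; omega, ?_⟩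
    left; simp
  set ε : Fin 5 → (withIsolated (cycleGraph 5) n).edgeSet :=
    fun i => ⟨_, hmem i⟩ with hε
  have hbij : Function.Bijective ε := by
    constructor
    · intro i j hij
      have h := congrArg Subtype.val hij
      simp only [hε, Sym2.eq, Sym2.rel_iff', Prod.mk.injEq, Prod.swap_prod_mk] at h
      have hi := i.isLt; have hj := j.isLt
      rcases h with ⟨h1, h2⟩ | ⟨h1, h2⟩ <;>
      · rw [Fin.ext_iff] at h1 h2 ⊢
        simp only [Fin.val_mk] at h1 h2
        omega
    · rintro ⟨e, he⟩
      induction e using Sym2.ind with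
      | _ x y =>
        rw [SimpleGraph.mem_edgeSet, adjG] at he
        obtain ⟨hx, hy, hne, hcyc | hcyc⟩ := he
        · refine ⟨⟨(x : ℕ), hx⟩, Subtype.ext ?_⟩
          simp only [hε]
          refine Sym2.eq_iff.mpr ?_
          exact Or.inl ⟨Fin.ext (by simp), Fin.ext (by simpa using hcyc)⟩
        · refine ⟨⟨(y : ℕ), hy⟩, Subtype.ext ?_⟩
          simp only [hε]
          refine Sym2.eq_iff.mpr ?_
          exact Or.inr ⟨Fin.ext (by simp), Fin.ext (by simpa using hcyc)⟩
  rw [← Nat.card_eq_of_bijective ε hbij]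
  simp [Nat.card_eq_fintype_card]

lemma case_chord {n s : ℕ} (hn : 5 ≤ n) (hs : 2 ≤ s) (u w : Fin n)
    (hu : (u : ℕ) < 5) (hw : (w : ℕ) = ((u : ℕ) + 2) % 5)
    (G' : SimpleGraph (Fin n))
    (hle : ∀ x y, (withIsolated (cycleGraph 5) n).Adj x y → G'.Adj x y)
    (huw : G'.Adj u w) : 3 ≤ guessingNumber G' s := by
  have hwlt : (w : ℕ) < 5 := by omega
  obtain ⟨t₃, ht3v⟩ : ∃ b : Fin n, (b : ℕ) = ((u : ℕ) + 1) % 5 := ⟨⟨_, by omega⟩, rfl⟩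
  obtain ⟨e₁, he1v⟩ : ∃ b : Fin n, (b : ℕ) = ((u : ℕ) + 3) % 5 := ⟨⟨_, by omega⟩, rfl⟩
  obtain ⟨e₂, he2v⟩ : ∃ b : Fin n, (b : ℕ) = ((u : ℕ) + 4) % 5 := ⟨⟨_, by omega⟩, rfl⟩
  have h13 : G'.Adj u t₃ := by
    apply hle; rw [adjG, ht3v]; refine ⟨hu, by omega, by omega, Or.inl rfl⟩
  have h23 : G'.Adj w t₃ := by
    apply hle; rw [adjG, ht3v]; refine ⟨hwlt, by omega, by omega, Or.inr (by omega)⟩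
  have hee : G'.Adj e₁ e₂ := by
    apply hle; rw [adjG, he1v, he2v]
    refine ⟨by omega, by omega, by omega, Or.inl (by omega)⟩
  refine triangle_edge_gn hs G' u w t₃ e₁ e₂ huw h13 h23 hee ?_ ?_ ?_ ?_ ?_ ?_ <;>
  · intro h
    have hvv := congrArg Fin.val h
    simp only [ht3v, he1v, he2v, hw] at hvv
    omega

lemma case_pendant {n s : ℕ} (hn : 5 ≤ n) (hs : 2 ≤ s) (u w : Fin n)
    (hu : (u : ℕ) < 5) (hw : 5 ≤ (w : ℕ))
    (G' : SimpleGraph (Fin n))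
    (hle : ∀ x y, (withIsolated (cycleGraph 5) n).Adj x y → G'.Adj x y)
    (huw : G'.Adj u w) : 3 ≤ guessingNumber G' s := by
  obtain ⟨b₁, hb1v⟩ : ∃ b : Fin n, (b : ℕ) = ((u : ℕ) + 1) % 5 := ⟨⟨_, by omega⟩, rfl⟩
  obtain ⟨b₂, hb2v⟩ : ∃ b : Fin n, (b : ℕ) = ((u : ℕ) + 2) % 5 := ⟨⟨_, by omega⟩, rfl⟩
  obtain ⟨c₁, hc1v⟩ : ∃ b : Fin n, (b : ℕ) = ((u : ℕ) + 3) % 5 := ⟨⟨_, by omega⟩, rfl⟩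
  obtain ⟨c₂, hc2v⟩ : ∃ b : Fin n, (b : ℕ) = ((u : ℕ) + 4) % 5 := ⟨⟨_, by omega⟩, rfl⟩
  have hbb : G'.Adj b₁ b₂ := by
    apply hle; rw [adjG, hb1v, hb2v]
    refine ⟨by omega, by omega, by omega, Or.inl (by omega)⟩
  have hcc : G'.Adj c₁ c₂ := by
    apply hle; rw [adjG, hc1v, hc2v]
    refine ⟨by omega, by omega, by omega, Or.inl (by omega)⟩
  refine matching3_gn hs G' u w b₁ b₂ c₁ c₂ huw hbb hcc ?_ ?_ ?_ ?_ ?_ ?_ ?_ ?_ ?_ ?_ ?_ ?_ <;>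
  · intro h
    have hvv := congrArg Fin.val h
    simp only [hb1v, hb2v, hc1v, hc2v] at hvv
    omega

lemma case_iso {n s : ℕ} (hn : 5 ≤ n) (hs : 2 ≤ s) (u w : Fin n)
    (hu : 5 ≤ (u : ℕ)) (hw : 5 ≤ (w : ℕ))
    (G' : SimpleGraph (Fin n))
    (hle : ∀ x y, (withIsolated (cycleGraph 5) n).Adj x y → G'.Adj x y)
    (huw : G'.Adj u w) : 3 ≤ guessingNumber G' s := by
  obtain ⟨b₁, hb1v⟩ : ∃ b : Fin n, (b : ℕ) = 0 := ⟨⟨_, by omega⟩, rfl⟩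
  obtain ⟨b₂, hb2v⟩ : ∃ b : Fin n, (b : ℕ) = 1 := ⟨⟨_, by omega⟩, rfl⟩
  obtain ⟨c₁, hc1v⟩ : ∃ b : Fin n, (b : ℕ) = 2 := ⟨⟨_, by omega⟩, rfl⟩
  obtain ⟨c₂, hc2v⟩ : ∃ b : Fin n, (b : ℕ) = 3 := ⟨⟨_, by omega⟩, rfl⟩
  have hbb : G'.Adj b₁ b₂ := by
    apply hle; rw [adjG, hb1v, hb2v]
    refine ⟨by omega, by omega, by omega, Or.inl (by omega)⟩
  have hcc : G'.Adj c₁ c₂ := by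
    apply hle; rw [adjG, hc1v, hc2v]
    refine ⟨by omega, by omega, by omega, Or.inl (by omega)⟩
  refine matching3_gn hs G' u w b₁ b₂ c₁ c₂ huw hbb hcc ?_ ?_ ?_ ?_ ?_ ?_ ?_ ?_ ?_ ?_ ?_ ?_ <;>
  · intro h
    have hvv := congrArg Fin.val h
    simp only [hb1v, hb2v, hc1v, hc2v] at hvv
    omega

/-- For `n ≥ 5` and `s ≥ 2`, the disjoint union of a 5-cycle with `n - 5`
isolated vertices is `(gn_s ≥ 3)`-saturated; consequently `sat(n, gn_s ≥ 3) ≤ 5`. -/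
theorem satGN_three_le (n s : ℕ) (hn : 5 ≤ n) (hs : 2 ≤ s) :
    GNSaturated (withIsolated (SimpleGraph.cycleGraph 5) n) s 3 ∧
    satGN n s 3 ≤ 5 := by
  have hsat : GNSaturated (withIsolated (SimpleGraph.cycleGraph 5) n) s 3 := by
    constructor
    · exact gn_lt_three hn hs
    · intro u w hne hnadj
      have hle : ∀ x y, (withIsolated (cycleGraph 5) n).Adj x y →
          (withIsolated (cycleGraph 5) n ⊔ SimpleGraph.fromEdgeSet {s(u, w)}).Adj x y :=
        fun x y h => (SimpleGraph.sup_adj _ _ _ _).mpr (Or.inl h)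
      have huw : (withIsolated (cycleGraph 5) n ⊔ SimpleGraph.fromEdgeSet {s(u, w)}).Adj u w :=
        (SimpleGraph.sup_adj _ _ _ _).mpr (Or.inr ((SimpleGraph.fromEdgeSet_adj _).mpr ⟨rfl, hne⟩))
      have hvne : (u : ℕ) ≠ (w : ℕ) := fun h => hne (Fin.ext h)
      by_cases hu5 : (u : ℕ) < 5
      · by_cases hw5 : (w : ℕ) < 5
        · have hD : ¬((((u : ℕ) + 1) % 5 = (w : ℕ)) ∨ (((w : ℕ) + 1) % 5 = (u : ℕ))) :=
            fun h => hnadj ((adjG u w).mpr ⟨hu5, hw5, hvne, h⟩)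
          have hor : (w : ℕ) = ((u : ℕ) + 2) % 5 ∨ (u : ℕ) = ((w : ℕ) + 2) % 5 := by omega
          rcases hor with h | h
          · exact case_chord hn hs u w hu5 h _ hle huw
          · exact case_chord hn hs w u hw5 h _ hle huw.symm
        · exact case_pendant hn hs u w hu5 (by omega) _ hle huw
      · by_cases hw5 : (w : ℕ) < 5
        · exact case_pendant hn hs w u hw5 (by omega) _ hle huw.symm
        · exact case_iso hn hs u w (by omega) (by omega) _ hle huw
  refine ⟨hsat, ?_⟩
  apply Nat.sInf_le
  exact ⟨withIsolated (cycleGraph 5) n, hsat, (edge_count hn).symm⟩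
end
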